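/- arXiv:2507.15611 — 5 statements merged into one kernel-verified Lean document; each statement's English description precedes it below -/
import Mathlib

section
/- In the algebra E, the bidegree (4, 65) component E^{4,65} is a one-dimensional F₂-vector space with basis the class of D₃(0); in particular D₃(0) ≠ 0 in E while the monomial h₀h₄²h₅ equals 0 in E. (This verifies Ext_A^{4,4+61}(ℤ/2,ℤ/2) = ⟨D₃(0)⟩.) -/
noncomputable section

open MvPolynomial

/-- Generators of Chen's algebra `E` in homological degrees ≤ 4.
Here `g i` denotes the generator `g_{i+1}` (the family `g` starts at index 1). -/
inductive Gen : Type
  | h (i : ℕ)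
  | c (i : ℕ)
  | d (i : ℕ)
  | e (i : ℕ)
  | f (i : ℕ)
  | g (i : ℕ)
  | p (i : ℕ)
  | D3 (i : ℕ)
  | p' (i : ℕ)

/-- Homological degree of the generators. -/
def hdeg : Gen → ℕ
  | .h _ => 1
  | .c _ => 3
  | _ => 4

/-- Internal degree of the generators. -/
def ideg : Gen → ℕ
  | .h i => 2 ^ i
  | .c i => 2 ^ (i + 3) + 2 ^ (i + 1) + 2 ^ i
  | .d i => 2 ^ (i + 4) + 2 ^ (i + 1)
  | .e i => 2 ^ (i + 4) + 2 ^ (i + 2) + 2 ^ i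
  | .f i => 2 ^ (i + 4) + 2 ^ (i + 2) + 2 ^ (i + 1)
  | .g i => 2 ^ (i + 4) + 2 ^ (i + 3)      -- internal degree of `g_{i+1}`
  | .p i => 2 ^ (i + 5) + 2 ^ (i + 2) + 2 ^ i
  | .D3 i => 2 ^ (i + 6) + 2 ^ i
  | .p' i => 2 ^ (i + 6) + 2 ^ (i + 3) + 2 ^ i

abbrev P := MvPolynomial Gen (ZMod 2)

/-- Chen's relations in homological degrees ≤ 4:
`hᵢhᵢ₊₁ = 0`, `hᵢhᵢ₊₂² = 0`, `hᵢ²hᵢ₊₃² = 0`, `hᵢ³ = hᵢ₋₁²hᵢ₊₁` (i ≥ 1), and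
`hⱼcᵢ = 0` for `j ∈ {i-1, i, i+2, i+3}`. -/
def rels : Set P :=
  ⋃ i : ℕ,
    ({ X (Gen.h i) * X (Gen.h (i + 1)),
       X (Gen.h i) * X (Gen.h (i + 2)) ^ 2,
       X (Gen.h i) ^ 2 * X (Gen.h (i + 3)) ^ 2,
       X (Gen.h (i + 1)) ^ 3 - X (Gen.h i) ^ 2 * X (Gen.h (i + 2)),
       X (Gen.h i) * X (Gen.c (i + 1)),
       X (Gen.h i) * X (Gen.c i),
       X (Gen.h (i + 2)) * X (Gen.c i),
       X (Gen.h (i + 3)) * X (Gen.c i) } : Set P)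

def relIdeal : Ideal P := Ideal.span rels

/-- Chen's algebra `E`, isomorphic to `Ext_A^{k,*}(ℤ/2, ℤ/2)` in homological degrees `k ≤ 4`. -/
abbrev E := P ⧸ relIdeal

def mkE : P →ₐ[ZMod 2] E := Ideal.Quotient.mkₐ (ZMod 2) relIdeal

/-- The bidegree `(k, d)` component `E^{k,d}` of `E`: the image of the space of polynomials
that are weighted homogeneous of homological degree `k` and internal degree `d`. -/
def component (k d : ℕ) : Submodule (ZMod 2) E :=
  Submodule.map mkE.toLinearMap
    (weightedHomogeneousSubmodule (ZMod 2) hdeg k ⊓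
      weightedHomogeneousSubmodule (ZMod 2) ideg d)

/-- `n_{s,t,u} = 2^{s+t+u} + 2^{s+t} + 2^s - 3`. -/
def nstu (s t u : ℕ) : ℕ := 2 ^ (s + t + u) + 2 ^ (s + t) + 2 ^ s - 3

deriving instance DecidableEq for Gen

open Gen in
/-- The generators of internal degree at most 65. -/
def genList : List Gen :=
  [h 0, h 1, h 2, h 3, h 4, h 5, h 6, c 0, c 1, c 2,
   d 0, d 1, e 0, e 1, f 0, f 1, g 0, g 1, p 0, D3 0]

lemma two_pow_le {a b : ℕ} (h : a ≤ b) : (2:ℕ) ^ a ≤ 2 ^ b := Nat.pow_le_pow_right (by norm_num) h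

set_option linter.unnecessarySeqFocus false in
lemma mem_genList_of_ideg_le (g : Gen) (hg : ideg g ≤ 65) : g ∈ genList := by
  cases g with
  | h i =>
    simp only [ideg] at hg
    have : i ≤ 6 := by
      by_contra hi
      have := two_pow_le (show 7 ≤ i by omega)
      norm_num at this; omega
    interval_cases i <;> decide
  | c i =>
    simp only [ideg] at hg
    have : i ≤ 2 := by
      by_contra hi
      have := two_pow_le (show 6 ≤ i + 3 by omega)
      have h2 := Nat.one_le_two_pow (n := i)
      have h3 := Nat.one_le_two_pow (n := i + 1)
      norm_num at this; omega
    interval_cases i <;> decide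
  | d i =>
    simp only [ideg] at hg
    have : i ≤ 1 := by
      by_contra hi
      have := two_pow_le (show 6 ≤ i + 4 by omega)
      have h3 := Nat.one_le_two_pow (n := i + 1)
      norm_num at this; omega
    interval_cases i <;> decide
  | e i =>
    simp only [ideg] at hg
    have : i ≤ 1 := by
      by_contra hi
      have := two_pow_le (show 6 ≤ i + 4 by omega)
      have h2 := Nat.one_le_two_pow (n := i)
      have h3 := Nat.one_le_two_pow (n := i + 2)
      norm_num at this; omega
    interval_cases i <;> decide
  | f i =>
    simp only [ideg] at hg
    have : i ≤ 1 := by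
      by_contra hi
      have := two_pow_le (show 6 ≤ i + 4 by omega)
      have h2 := Nat.one_le_two_pow (n := i + 1)
      have h3 := Nat.one_le_two_pow (n := i + 2)
      norm_num at this; omega
    interval_cases i <;> decide
  | g i =>
    simp only [ideg] at hg
    have : i ≤ 1 := by
      by_contra hi
      have := two_pow_le (show 6 ≤ i + 4 by omega)
      have h2 := two_pow_le (show 1 ≤ i + 3 by omega)
      norm_num at this h2; omega
    interval_cases i <;> decide
  | p i =>
    simp only [ideg] at hg
    have : i ≤ 0 := by
      by_contra hi
      have := two_pow_le (show 6 ≤ i + 5 by omega)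
      have h2 := Nat.one_le_two_pow (n := i)
      have h3 := Nat.one_le_two_pow (n := i + 2)
      norm_num at this; omega
    interval_cases i <;> decide
  | D3 i =>
    simp only [ideg] at hg
    have : i ≤ 0 := by
      by_contra hi
      have := two_pow_le (show 7 ≤ i + 6 by omega)
      have h2 := Nat.one_le_two_pow (n := i)
      norm_num at this; omega
    interval_cases i <;> decide
  | p' i =>
    exfalso
    simp only [ideg] at hg
    have := two_pow_le (show 6 ≤ i + 6 by omega)
    have h2 := Nat.one_le_two_pow (n := i)
    have h3 := two_pow_le (show 3 ≤ i + 3 by omega)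
    norm_num at this h3; omega

set_option maxHeartbeats 4000000 in
/-- The combinatorial core: the only solutions of the two weight equations. -/
lemma arith20 (a0 a1 a2 a3 a4 a5 a6 b0 b1 b2 d0 d1 e0 e1 F0 F1 g0 g1 p0 D0 : ℕ)
    (E1 : a0 + a1 + a2 + a3 + a4 + a5 + a6 + 3*b0 + 3*b1 + 3*b2 + 4*d0 + 4*d1 + 4*e0 + 4*e1 +
      4*F0 + 4*F1 + 4*g0 + 4*g1 + 4*p0 + 4*D0 = 4)
    (E2 : a0 + 2*a1 + 4*a2 + 8*a3 + 16*a4 + 32*a5 + 64*a6 + 11*b0 + 22*b1 + 44*b2 + 18*d0 +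
      36*d1 + 21*e0 + 42*e1 + 22*F0 + 44*F1 + 24*g0 + 48*g1 + 37*p0 + 65*D0 = 65) :
    (a0 = 0 ∧ a1 = 0 ∧ a2 = 0 ∧ a3 = 0 ∧ a4 = 0 ∧ a5 = 0 ∧ a6 = 0 ∧ b0 = 0 ∧ b1 = 0 ∧ b2 = 0 ∧
      d0 = 0 ∧ d1 = 0 ∧ e0 = 0 ∧ e1 = 0 ∧ F0 = 0 ∧ F1 = 0 ∧ g0 = 0 ∧ g1 = 0 ∧ p0 = 0 ∧ D0 = 1) ∨
    (a0 = 1 ∧ a1 = 0 ∧ a2 = 0 ∧ a3 = 0 ∧ a4 = 2 ∧ a5 = 1 ∧ a6 = 0 ∧ b0 = 0 ∧ b1 = 0 ∧ b2 = 0 ∧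
      d0 = 0 ∧ d1 = 0 ∧ e0 = 0 ∧ e1 = 0 ∧ F0 = 0 ∧ F1 = 0 ∧ g0 = 0 ∧ g1 = 0 ∧ p0 = 0 ∧
      D0 = 0) := by
  have ha6 : a6 = 0 ∨ a6 = 1 := by omega
  have ha5 : a5 = 0 ∨ a5 = 1 ∨ a5 = 2 := by omega
  have ha4 : a4 = 0 ∨ a4 = 1 ∨ a4 = 2 ∨ a4 = 3 ∨ a4 = 4 := by omega
  rcases (show b0 = 1 ∨ b1 = 1 ∨ b2 = 1 ∨ d0 = 1 ∨ d1 = 1 ∨ e0 = 1 ∨ e1 = 1 ∨ F0 = 1 ∨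
      F1 = 1 ∨ g0 = 1 ∨ g1 = 1 ∨ p0 = 1 ∨ D0 = 1 ∨
      (b0 = 0 ∧ b1 = 0 ∧ b2 = 0 ∧ d0 = 0 ∧ d1 = 0 ∧ e0 = 0 ∧ e1 = 0 ∧ F0 = 0 ∧ F1 = 0 ∧
       g0 = 0 ∧ g1 = 0 ∧ p0 = 0 ∧ D0 = 0) by omega) with
    hs|hs|hs|hs|hs|hs|hs|hs|hs|hs|hs|hs|hs|hs
  <;> rcases ha6 with h6|h6 <;> rcases ha5 with h5|h5|h5 <;>
    rcases ha4 with h4|h4|h4|h4|h4 <;> omega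

set_option maxHeartbeats 4000000 in
open Gen in
lemma key (f : Gen →₀ ℕ) (h4 : Finsupp.weight hdeg f = 4) (h65 : Finsupp.weight ideg f = 65) :
    f = Finsupp.single (D3 0) 1 ∨
      f = Finsupp.single (h 0) 1 + Finsupp.single (h 4) 2 + Finsupp.single (h 5) 1 := by
  have hle : ∀ g : Gen, f g ≠ 0 → ideg g ≤ 65 := fun g hfg =>
    h65 ▸ Finsupp.le_weight_of_ne_zero' ideg hfg
  have hLnd : genList.Nodup := by decide
  have hsub : f.support ⊆ genList.toFinset := fun g hgs =>
    List.mem_toFinset.2 (mem_genList_of_ideg_le g (hle g (Finsupp.mem_support_iff.1 hgs)))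
  have hwf : f = ∑ g ∈ genList.toFinset, Finsupp.single g (f g) := by
    conv_lhs => rw [← Finsupp.sum_single f]
    exact Finsupp.sum_of_support_subset f hsub _ (fun i _ => Finsupp.single_zero i)
  have hw : ∀ w : Gen → ℕ, Finsupp.weight w f = (genList.map (fun g => f g * w g)).sum := by
    intro w
    rw [Finsupp.weight_apply, Finsupp.sum_of_support_subset f hsub _ (fun i _ => by simp),
      ← List.sum_toFinset _ hLnd]
    simp [smul_eq_mul]
  have e1 := hw hdeg; rw [h4] at e1
  have e2 := hw ideg; rw [h65] at e2
  simp only [genList, List.map_cons, List.map_nil, List.sum_cons, List.sum_nil, hdeg, ideg]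
    at e1 e2
  norm_num at e1 e2
  have E1 : f (h 0) + f (h 1) + f (h 2) + f (h 3) + f (h 4) + f (h 5) + f (h 6) +
      3 * f (c 0) + 3 * f (c 1) + 3 * f (c 2) + 4 * f (d 0) + 4 * f (d 1) + 4 * f (e 0) +
      4 * f (e 1) + 4 * f (Gen.f 0) + 4 * f (Gen.f 1) + 4 * f (g 0) + 4 * f (g 1) +
      4 * f (p 0) + 4 * f (D3 0) = 4 := by omega
  have E2 : f (h 0) + 2 * f (h 1) + 4 * f (h 2) + 8 * f (h 3) + 16 * f (h 4) + 32 * f (h 5) +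
      64 * f (h 6) + 11 * f (c 0) + 22 * f (c 1) + 44 * f (c 2) + 18 * f (d 0) +
      36 * f (d 1) + 21 * f (e 0) + 42 * f (e 1) + 22 * f (Gen.f 0) + 44 * f (Gen.f 1) +
      24 * f (g 0) + 48 * f (g 1) + 37 * f (p 0) + 65 * f (D3 0) = 65 := by omega
  rw [hwf]
  rw [show genList.toFinset = ({h 0, h 1, h 2, h 3, h 4, h 5, h 6, c 0, c 1, c 2, d 0, d 1, e 0,
    e 1, Gen.f 0, Gen.f 1, g 0, g 1, p 0, D3 0} : Finset Gen) from rfl]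
  rcases arith20 _ _ _ _ _ _ _ _ _ _ _ _ _ _ _ _ _ _ _ _ E1 E2 with
    ⟨q1,q2,q3,q4,q5,q6,q7,q8,q9,q10,q11,q12,q13,q14,q15,q16,q17,q18,q19,q20⟩ |
    ⟨q1,q2,q3,q4,q5,q6,q7,q8,q9,q10,q11,q12,q13,q14,q15,q16,q17,q18,q19,q20⟩
  · left
    simp [Finset.sum_insert, q1,q2,q3,q4,q5,q6,q7,q8,q9,q10,q11,q12,q13,q14,q15,q16,q17,
      q18,q19,q20]
  · right
    simp [Finset.sum_insert, q1,q2,q3,q4,q5,q6,q7,q8,q9,q10,q11,q12,q13,q14,q15,q16,q17,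
      q18,q19,q20]
    abel

/-- Evaluation sending `h` and `c` generators to `0` and everything else to `1`. -/
def testEval : Gen → ZMod 2 := fun g =>
  match g with
  | .h _ => 0
  | .c _ => 0
  | _ => 1

lemma relIdeal_le_ker : relIdeal ≤ RingHom.ker (aeval testEval (R := ZMod 2)) := by
  rw [relIdeal, Ideal.span_le]
  rintro r hr
  simp only [rels, Set.mem_iUnion] at hr
  obtain ⟨i, hi⟩ := hr
  simp only [Set.mem_insert_iff, Set.mem_singleton_iff] at hi
  rcases hi with h|h|h|h|h|h|h|h <;> subst h <;>
    simp [RingHom.mem_ker, testEval]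

lemma X_D3_not_mem : (X (Gen.D3 0) : P) ∉ relIdeal := by
  intro hmem
  have := relIdeal_le_ker hmem
  simp [RingHom.mem_ker, testEval] at this

lemma hh_mem : (X (Gen.h 0) * X (Gen.h 4) ^ 2 * X (Gen.h 5) : P) ∈ relIdeal := by
  have h45 : (X (Gen.h 4) * X (Gen.h 5) : P) ∈ relIdeal := by
    apply Ideal.subset_span
    simp only [rels, Set.mem_iUnion]
    exact ⟨4, by norm_num⟩
  have := Ideal.mul_mem_left relIdeal (X (Gen.h 0) * X (Gen.h 4)) h45
  convert this using 1
  ring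

lemma mkE_eq_zero_iff (x : P) : mkE x = 0 ↔ x ∈ relIdeal := by
  rw [mkE, Ideal.Quotient.mkₐ_eq_mk, Ideal.Quotient.eq_zero_iff_mem]

/-- `E^{4,65}` is one-dimensional over `F₂` with basis the class of `D₃(0)`;
in particular `D₃(0) ≠ 0` while `h₀h₄²h₅ = 0` in `E`. -/
theorem stmt0 :
    component 4 65 = Submodule.span (ZMod 2) {mkE (X (Gen.D3 0))} ∧
      mkE (X (Gen.D3 0)) ≠ 0 ∧
      mkE (X (Gen.h 0) * X (Gen.h 4) ^ 2 * X (Gen.h 5)) = 0 := by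
  refine ⟨?_, ?_, ?_⟩
  · apply le_antisymm
    · rintro x ⟨q, ⟨hq4, hq65⟩, rfl⟩
      replace hq4 : IsWeightedHomogeneous hdeg q 4 := hq4
      replace hq65 : IsWeightedHomogeneous ideg q 65 := hq65
      rw [AlgHom.toLinearMap_apply, q.as_sum, map_sum]
      apply Submodule.sum_mem
      intro v hv
      have hc : coeff v q ≠ 0 := MvPolynomial.mem_support_iff.1 hv
      rcases key v (hq4 hc) (hq65 hc) with h | h
      · subst h
        have : (monomial (Finsupp.single (Gen.D3 0) 1) (coeff (Finsupp.single (Gen.D3 0) 1) q)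
            : P) = coeff (Finsupp.single (Gen.D3 0) 1) q • X (Gen.D3 0) := by
          rw [MvPolynomial.smul_eq_C_mul, C_mul_X_eq_monomial]
        rw [this, map_smul]
        exact Submodule.smul_mem _ _ (Submodule.mem_span_singleton_self _)
      · subst h
        have : (monomial (Finsupp.single (Gen.h 0) 1 + Finsupp.single (Gen.h 4) 2 +
              Finsupp.single (Gen.h 5) 1) (coeff (Finsupp.single (Gen.h 0) 1 +
              Finsupp.single (Gen.h 4) 2 + Finsupp.single (Gen.h 5) 1) q) : P) =
            coeff (Finsupp.single (Gen.h 0) 1 + Finsupp.single (Gen.h 4) 2 +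
              Finsupp.single (Gen.h 5) 1) q •
            (X (Gen.h 0) * X (Gen.h 4) ^ 2 * X (Gen.h 5)) := by
          rw [show (X (Gen.h 0) : P) = X (Gen.h 0) ^ 1 from (pow_one _).symm,
            show (X (Gen.h 5) : P) = X (Gen.h 5) ^ 1 from (pow_one _).symm,
            X_pow_eq_monomial, X_pow_eq_monomial, X_pow_eq_monomial, monomial_mul, monomial_mul,
            one_mul, one_mul, smul_monomial, smul_eq_mul, mul_one]
        rw [this, map_smul]
        have hz : mkE (X (Gen.h 0) * X (Gen.h 4) ^ 2 * X (Gen.h 5)) = 0 :=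
          (mkE_eq_zero_iff _).2 hh_mem
        rw [hz, smul_zero]
        exact Submodule.zero_mem _
    · rw [Submodule.span_le, Set.singleton_subset_iff]
      refine ⟨X (Gen.D3 0), ⟨?_, ?_⟩, rfl⟩
      · exact isWeightedHomogeneous_X _ _ _
      · have : ideg (Gen.D3 0) = 65 := by norm_num [ideg]
        exact this ▸ isWeightedHomogeneous_X (ZMod 2) ideg (Gen.D3 0)
  · intro hzero
    exact X_D3_not_mem ((mkE_eq_zero_iff _).1 hzero)
  · exact (mkE_eq_zero_iff _).2 hh_mem
end
end

section
/- For every natural number s ≥ 2, the bidegree (4, 4 + n_{s,1,2}) component of E, i.e. E^{4, 2^{s+3}+2^{s+1}+2^s+1}, is a one-dimensional F₂-vector space with basis the class of h₀c_s; in particular h₀c_s ≠ 0 in E. -/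
noncomputable section

open MvPolynomial

lemma pow2_cases (x : ℕ) : 2^x = 1 ∨ 2^x = 2 ∨ 2^x = 4 ∨ 2^x % 8 = 0 := by
  match x with
  | 0 => left; rfl
  | 1 => right; left; rfl
  | 2 => right; right; left; rfl
  | (n+3) =>
    right; right; right
    have h : (2:ℕ)^(n+3) = 8 * 2^n := by ring
    omega

lemma three_pows (s p q r : ℕ) (h : 2^p + 2^q + 2^r = 11 * 2^s) :
    ({p, q, r} : Multiset ℕ) = {s, s+1, s+3} := by
  induction s generalizing p q r with
  | zero =>
    have hq1 : (1:ℕ) ≤ 2^q := Nat.one_le_two_pow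
    have hr1 : (1:ℕ) ≤ 2^r := Nat.one_le_two_pow
    have hp1 : (1:ℕ) ≤ 2^p := Nat.one_le_two_pow
    have hp : p < 4 := by
      have : (2:ℕ)^p < 2^4 := by norm_num at h ⊢; omega
      exact (Nat.pow_lt_pow_iff_right (by norm_num)).1 this
    have hq : q < 4 := by
      have : (2:ℕ)^q < 2^4 := by norm_num at h ⊢; omega
      exact (Nat.pow_lt_pow_iff_right (by norm_num)).1 this
    have hr : r < 4 := by
      have : (2:ℕ)^r < 2^4 := by norm_num at h ⊢; omega
      exact (Nat.pow_lt_pow_iff_right (by norm_num)).1 this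
    interval_cases p <;> interval_cases q <;> interval_cases r <;>
      first
        | (exfalso; norm_num at h; done)
        | decide
  | succ s ih =>
    rw [pow_succ] at h
    have fs := pow2_cases s
    have hs1 : (1:ℕ) ≤ 2^s := Nat.one_le_two_pow
    have hp : p ≠ 0 := by
      rintro rfl
      have := pow2_cases q; have := pow2_cases r
      simp only [pow_zero] at h; omega
    have hq : q ≠ 0 := by
      rintro rfl
      have := pow2_cases p; have := pow2_cases r
      simp only [pow_zero] at h; omega
    have hr : r ≠ 0 := by
      rintro rfl
      have := pow2_cases p; have := pow2_cases q
      simp only [pow_zero] at h; omega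
    obtain ⟨p', rfl⟩ := Nat.exists_eq_succ_of_ne_zero hp
    obtain ⟨q', rfl⟩ := Nat.exists_eq_succ_of_ne_zero hq
    obtain ⟨r', rfl⟩ := Nat.exists_eq_succ_of_ne_zero hr
    rw [pow_succ, pow_succ, pow_succ] at h
    have h' : 2^p' + 2^q' + 2^r' = 11 * 2^s := by omega
    have hm := ih p' q' r' h'
    calc ({p'+1, q'+1, r'+1} : Multiset ℕ)
        = Multiset.map (· + 1) {p', q', r'} := by
          simp [Multiset.insert_eq_cons]
      _ = Multiset.map (· + 1) {s, s+1, s+3} := by rw [hm]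
      _ = {s+1, s+1+1, s+1+3} := by
          simp [Multiset.insert_eq_cons]

lemma four_pows (s a b c e : ℕ) (hs : 2 ≤ s)
    (h : 2^a + 2^b + 2^c + 2^e = 2^(s+3) + 2^(s+1) + 2^s + 1) :
    ({a, b, c, e} : Multiset ℕ) = {0, s, s+1, s+3} := by
  have h' : 2^a + 2^b + 2^c + 2^e = 11 * 2^s + 1 := by
    rw [h, pow_add, pow_add]; ring
  simp only [Multiset.insert_eq_cons, ← Multiset.cons_zero]
  by_cases ha : a = 0
  · subst ha
    have h3 := three_pows s b c e (by simp only [pow_zero] at h'; omega)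
    simp only [Multiset.insert_eq_cons, ← Multiset.cons_zero] at h3
    exact congrArg _ h3
  by_cases hb : b = 0
  · subst hb
    have h3 := three_pows s a c e (by simp only [pow_zero] at h'; omega)
    simp only [Multiset.insert_eq_cons, ← Multiset.cons_zero] at h3
    rw [Multiset.cons_swap]
    exact congrArg _ h3
  by_cases hc : c = 0
  · subst hc
    have h3 := three_pows s a b e (by simp only [pow_zero] at h'; omega)
    simp only [Multiset.insert_eq_cons, ← Multiset.cons_zero] at h3
    rw [Multiset.cons_swap b 0, Multiset.cons_swap a 0]
    exact congrArg _ h3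
  by_cases he : e = 0
  · subst he
    have h3 := three_pows s a b c (by simp only [pow_zero] at h'; omega)
    simp only [Multiset.insert_eq_cons, ← Multiset.cons_zero] at h3
    rw [Multiset.cons_swap c 0, Multiset.cons_swap b 0, Multiset.cons_swap a 0]
    exact congrArg _ h3
  · exfalso
    obtain ⟨a', rfl⟩ := Nat.exists_eq_succ_of_ne_zero ha
    obtain ⟨b', rfl⟩ := Nat.exists_eq_succ_of_ne_zero hb
    obtain ⟨c', rfl⟩ := Nat.exists_eq_succ_of_ne_zero hc
    obtain ⟨e', rfl⟩ := Nat.exists_eq_succ_of_ne_zero he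
    rw [pow_succ, pow_succ, pow_succ, pow_succ] at h'
    have := pow2_cases s
    have : (1:ℕ) ≤ 2^s := Nat.one_le_two_pow
    have h4 : (4:ℕ) ≤ 2^s := by calc (4:ℕ) = 2^2 := rfl
      _ ≤ 2^s := Nat.pow_le_pow_right (by norm_num) hs
    omega

lemma hc_pows (s i j : ℕ) (hs : 2 ≤ s)
    (h : 2^(i+3) + 2^(i+1) + 2^i + 2^j = 2^(s+3) + 2^(s+1) + 2^s + 1) :
    j = 0 ∧ i = s := by
  rw [pow_add, pow_add, pow_add, pow_add] at h
  have fi := pow2_cases i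
  have fs := pow2_cases s
  have h4 : (4:ℕ) ≤ 2^s := by calc (4:ℕ) = 2^2 := rfl
    _ ≤ 2^s := Nat.pow_le_pow_right (by norm_num) hs
  have hi1 : (1:ℕ) ≤ 2^i := Nat.one_le_two_pow
  have hj : j = 0 := by
    by_contra hj
    obtain ⟨j', rfl⟩ := Nat.exists_eq_succ_of_ne_zero hj
    rw [pow_succ] at h
    have := pow2_cases j'
    have : (1:ℕ) ≤ 2^j' := Nat.one_le_two_pow
    omega
  subst hj
  rw [pow_zero] at h
  have heq : (2:ℕ)^i = 2^s := by omega
  exact ⟨rfl, Nat.pow_right_injective (le_refl 2) heq⟩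
lemma hdeg_pos (g : Gen) : hdeg g ≠ 0 := by cases g <;> simp [hdeg]

lemma weight_single_one (w : Gen → ℕ) (g : Gen) :
    Finsupp.weight w (Finsupp.single g 1) = w g := by
  rw [Finsupp.weight_apply, Finsupp.sum_single_index] <;> simp

lemma weight_hdeg_zero {m : Gen →₀ ℕ} (h : Finsupp.weight hdeg m = 0) : m = 0 := by
  have : Finsupp.NonTorsionWeight ℕ hdeg :=
    Finsupp.nonTorsionWeight_of ℕ hdeg hdeg_pos
  exact (Finsupp.weight_eq_zero_iff_eq_zero hdeg).1 h

lemma peel {m : Gen →₀ ℕ} {n : ℕ} (h : Finsupp.weight hdeg m = n + 1) :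
    ∃ (g : Gen) (m' : Gen →₀ ℕ), m = Finsupp.single g 1 + m' ∧
      hdeg g + Finsupp.weight hdeg m' = n + 1 := by
  have hm : m ≠ 0 := by
    rintro rfl; rw [map_zero] at h; omega
  obtain ⟨g, hg⟩ := Finsupp.ne_iff.1 hm
  simp only [Finsupp.coe_zero, Pi.zero_apply] at hg
  have heq : m = Finsupp.single g 1 + (m - Finsupp.single g 1) := by
    ext x
    simp only [Finsupp.add_apply, Finsupp.tsub_apply]
    by_cases hx : x = g
    · subst hx; simp only [Finsupp.single_eq_same]; omega
    · simp [Finsupp.single_eq_of_ne' (Ne.symm hx)]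
  refine ⟨g, m - Finsupp.single g 1, heq, ?_⟩
  rw [← h]
  conv_rhs => rw [heq]
  rw [map_add, weight_single_one]

lemma shape1 {m : Gen →₀ ℕ} (h : Finsupp.weight hdeg m = 1) :
    ∃ j, m = Finsupp.single (Gen.h j) 1 := by
  obtain ⟨g, m', heq, hw⟩ := peel h
  cases g <;> try (exfalso; simp only [hdeg] at hw; omega)
  case h j =>
    have h0 : Finsupp.weight hdeg m' = 0 := by simp only [hdeg] at hw; omega
    rw [weight_hdeg_zero h0, add_zero] at heq
    exact ⟨j, heq⟩

lemma shape2 {m : Gen →₀ ℕ} (h : Finsupp.weight hdeg m = 2) :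
    ∃ a b, m = Finsupp.single (Gen.h a) 1 + Finsupp.single (Gen.h b) 1 := by
  obtain ⟨g, m', heq, hw⟩ := peel h
  cases g <;> try (exfalso; simp only [hdeg] at hw; omega)
  case h a =>
    have h1 : Finsupp.weight hdeg m' = 1 := by simp only [hdeg] at hw; omega
    obtain ⟨b, rfl⟩ := shape1 h1
    exact ⟨a, b, heq⟩

lemma shape3 {m : Gen →₀ ℕ} (h : Finsupp.weight hdeg m = 3) :
    (∃ i, m = Finsupp.single (Gen.c i) 1) ∨
    (∃ a b c, m = Finsupp.single (Gen.h a) 1 + Finsupp.single (Gen.h b) 1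
      + Finsupp.single (Gen.h c) 1) := by
  obtain ⟨g, m', heq, hw⟩ := peel h
  cases g <;> try (exfalso; simp only [hdeg] at hw; omega)
  case h a =>
    have h2 : Finsupp.weight hdeg m' = 2 := by simp only [hdeg] at hw; omega
    obtain ⟨b, c, rfl⟩ := shape2 h2
    right
    exact ⟨a, b, c, by rw [heq, add_assoc]⟩
  case c i =>
    have h0 : Finsupp.weight hdeg m' = 0 := by simp only [hdeg] at hw; omega
    rw [weight_hdeg_zero h0, add_zero] at heq
    exact Or.inl ⟨i, heq⟩

lemma shape4 {m : Gen →₀ ℕ} (h : Finsupp.weight hdeg m = 4) :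
    (∃ G, hdeg G = 4 ∧ m = Finsupp.single G 1) ∨
    (∃ i j, m = Finsupp.single (Gen.c i) 1 + Finsupp.single (Gen.h j) 1) ∨
    (∃ a b c e, m = Finsupp.single (Gen.h a) 1 + Finsupp.single (Gen.h b) 1
      + Finsupp.single (Gen.h c) 1 + Finsupp.single (Gen.h e) 1) := by
  obtain ⟨g, m', heq, hw⟩ := peel h
  cases g
  case h a =>
    have h3 : Finsupp.weight hdeg m' = 3 := by simp only [hdeg] at hw; omega
    rcases shape3 h3 with ⟨i, rfl⟩ | ⟨b, c, e, rfl⟩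
    · exact Or.inr (Or.inl ⟨i, a, by rw [heq, add_comm]⟩)
    · refine Or.inr (Or.inr ⟨a, b, c, e, ?_⟩)
      rw [heq]
      abel
  case c i =>
    have h1 : Finsupp.weight hdeg m' = 1 := by simp only [hdeg] at hw; omega
    obtain ⟨j, rfl⟩ := shape1 h1
    exact Or.inr (Or.inl ⟨i, j, heq⟩)
  all_goals {
    have h0 : Finsupp.weight hdeg m' = 0 := by simp only [hdeg] at hw; omega
    rw [weight_hdeg_zero h0, add_zero] at heq
    refine Or.inl ⟨_, ?_, heq⟩
    rfl }

lemma ideg_ne (s : ℕ) (hs : 2 ≤ s) (G : Gen) (hG : hdeg G = 4) :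
    ideg G ≠ 2^(s+3) + 2^(s+1) + 2^s + 1 := by
  intro h
  have fs := pow2_cases s
  have hs1 : (1:ℕ) ≤ 2^s := Nat.one_le_two_pow
  have h4 : (4:ℕ) ≤ 2^s := by
    calc (4:ℕ) = 2^2 := rfl
      _ ≤ 2^s := Nat.pow_le_pow_right (by norm_num) hs
  rw [pow_add, pow_add] at h
  rcases G with i|i|i|i|i|i|i|i|i <;>
      simp only [hdeg] at hG <;>
      simp only [ideg, pow_add] at h <;>
      (try norm_num at h hG ⊢) <;>
      (try omega) <;>
      (have fi := pow2_cases i; have hi1 : (1:ℕ) ≤ 2^i := Nat.one_le_two_pow; omega)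

lemma X_eq_mono (g : Gen) : (X g : P) = monomial (Finsupp.single g 1) 1 := by
  rw [← pow_one (X g : P), X_pow_eq_monomial]

lemma monomial_mem (s : ℕ) (hs : 2 ≤ s) (m : Gen →₀ ℕ)
    (h4 : Finsupp.weight hdeg m = 4)
    (hD : Finsupp.weight ideg m = 2^(s+3) + 2^(s+1) + 2^s + 1) :
    monomial m (1 : ZMod 2) = X (Gen.h 0) * X (Gen.c s) ∨
      monomial m (1 : ZMod 2) ∈ relIdeal := by
  rcases shape4 h4 with ⟨G, hG, rfl⟩ | ⟨i, j, rfl⟩ | ⟨a, b, c, e, rfl⟩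
  · rw [weight_single_one] at hD
    exact absurd hD (ideg_ne s hs G hG)
  · left
    rw [map_add, weight_single_one, weight_single_one] at hD
    simp only [ideg] at hD
    obtain ⟨hj, hi⟩ := hc_pows s i j hs (by omega)
    subst hj; rw [hi]
    have : (Finsupp.single (Gen.c s) 1 + Finsupp.single (Gen.h 0) 1 : Gen →₀ ℕ)
        = Finsupp.single (Gen.h 0) 1 + Finsupp.single (Gen.c s) 1 := add_comm _ _
    rw [this]
    simp only [X_eq_mono, monomial_mul, one_mul]
  · right
    rw [map_add, map_add, map_add, weight_single_one, weight_single_one,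
      weight_single_one, weight_single_one] at hD
    simp only [ideg] at hD
    have hms := four_pows s a b c e hs (by omega)
    have key : (monomial (Finsupp.single (Gen.h a) 1 + Finsupp.single (Gen.h b) 1
        + Finsupp.single (Gen.h c) 1 + Finsupp.single (Gen.h e) 1) (1:ZMod 2) : P)
        = X (Gen.h a) * X (Gen.h b) * X (Gen.h c) * X (Gen.h e) := by
      simp only [X_eq_mono, monomial_mul, one_mul]
    rw [key]
    have prodeq : (X (Gen.h a) * X (Gen.h b) * X (Gen.h c) * X (Gen.h e) : P)
        = X (Gen.h 0) * X (Gen.h s) * X (Gen.h (s+1)) * X (Gen.h (s+3)) := by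
      have hcg := congrArg
        (fun M : Multiset ℕ => (M.map (fun n => (X (Gen.h n) : P))).prod) hms
      simpa [Multiset.insert_eq_cons, mul_assoc] using hcg
    rw [prodeq, show (X (Gen.h 0) * X (Gen.h s) * X (Gen.h (s+1)) * X (Gen.h (s+3)) : P)
        = (X (Gen.h 0) * X (Gen.h (s+3))) * (X (Gen.h s) * X (Gen.h (s+1))) from by ring]
    apply Ideal.mul_mem_left
    apply Ideal.subset_span
    exact Set.mem_iUnion.2 ⟨s, by simp⟩

/-- Detection function for nonvanishing of `h₀ c_s`. -/
def detect (s : ℕ) : Gen → ZMod 2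
  | .h 0 => 1
  | .c i => if i = s then 1 else 0
  | _ => 0

lemma detect_ker (s : ℕ) (hs : 2 ≤ s) :
    relIdeal ≤ RingHom.ker (MvPolynomial.aeval (detect s)).toRingHom := by
  rw [relIdeal, Ideal.span_le]
  rintro x hx
  simp only [rels, Set.mem_iUnion, Set.mem_insert_iff, Set.mem_singleton_iff] at hx
  obtain ⟨i, hx⟩ := hx
  simp only [SetLike.mem_coe, RingHom.mem_ker]
  rcases hx with rfl|rfl|rfl|rfl|rfl|rfl|rfl|rfl <;>
    simp only [AlgHom.toRingHom_eq_coe, RingHom.coe_coe, map_mul, map_sub, map_pow, aeval_X]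
  · show _ * detect s (Gen.h (i+1)) = 0
    rw [show detect s (Gen.h (i+1)) = 0 from rfl, mul_zero]
  · show _ * detect s (Gen.h (i+2)) ^ 2 = 0
    rw [show detect s (Gen.h (i+2)) = 0 from rfl]
    ring
  · show _ * detect s (Gen.h (i+3)) ^ 2 = 0
    rw [show detect s (Gen.h (i+3)) = 0 from rfl]
    ring
  · show detect s (Gen.h (i+1)) ^ 3 - _ * detect s (Gen.h (i+2)) = 0
    rw [show detect s (Gen.h (i+1)) = 0 from rfl, show detect s (Gen.h (i+2)) = 0 from rfl]
    ring
  · -- h i * c (i+1)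
    by_cases hi : i + 1 = s
    · obtain ⟨s', rfl⟩ : ∃ s', s = s' + 2 := ⟨s - 2, by omega⟩
      obtain rfl : i = s' + 1 := by omega
      show detect (s'+2) (Gen.h (s'+1)) * _ = 0
      rw [show detect (s'+2) (Gen.h (s'+1)) = 0 from rfl, zero_mul]
    · show _ * detect s (Gen.c (i+1)) = 0
      rw [show detect s (Gen.c (i+1)) = if i + 1 = s then 1 else 0 from rfl, if_neg hi,
        mul_zero]
  · -- h i * c i
    by_cases hi : i = s
    · subst hi
      obtain ⟨s', rfl⟩ : ∃ s', i = s' + 2 := ⟨i - 2, by omega⟩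
      show detect (s'+2) (Gen.h (s'+2)) * _ = 0
      rw [show detect (s'+2) (Gen.h (s'+2)) = 0 from rfl, zero_mul]
    · show _ * detect s (Gen.c i) = 0
      rw [show detect s (Gen.c i) = if i = s then 1 else 0 from rfl, if_neg hi, mul_zero]
  · show detect s (Gen.h (i+2)) * _ = 0
    rw [show detect s (Gen.h (i+2)) = 0 from rfl, zero_mul]
  · show detect s (Gen.h (i+3)) * _ = 0
    rw [show detect s (Gen.h (i+3)) = 0 from rfl, zero_mul]

lemma h0cs_ne_zero (s : ℕ) (hs : 2 ≤ s) :
    mkE (X (Gen.h 0) * X (Gen.c s)) ≠ 0 := by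
  intro h0
  have hmem : (X (Gen.h 0) * X (Gen.c s) : P) ∈ relIdeal := by
    rwa [mkE, Ideal.Quotient.mkₐ_eq_mk, Ideal.Quotient.eq_zero_iff_mem] at h0
  have := detect_ker s hs hmem
  rw [RingHom.mem_ker] at this
  simp only [AlgHom.toRingHom_eq_coe, RingHom.coe_coe, map_mul, aeval_X] at this
  rw [show detect s (Gen.h 0) = 1 from rfl,
    show detect s (Gen.c s) = if s = s then 1 else 0 from rfl, if_pos rfl, one_mul] at this
  exact one_ne_zero this

/-- For every `s ≥ 2`, `E^{4, 4 + n_{s,1,2}} = E^{4, 2^{s+3}+2^{s+1}+2^s+1}` is one-dimensional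
over `F₂` with basis the class of `h₀c_s`; in particular `h₀c_s ≠ 0` in `E`. -/
theorem stmt2 (s : ℕ) (hs : 2 ≤ s) :
    component 4 (2 ^ (s + 3) + 2 ^ (s + 1) + 2 ^ s + 1) =
        Submodule.span (ZMod 2) {mkE (X (Gen.h 0) * X (Gen.c s))} ∧
      mkE (X (Gen.h 0) * X (Gen.c s)) ≠ 0 := by
  constructor
  · apply le_antisymm
    · rintro x ⟨p, ⟨hp4, hpD⟩, rfl⟩
      rw [SetLike.mem_coe, mem_weightedHomogeneousSubmodule] at hp4 hpD
      rw [p.as_sum, map_sum]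
      apply Submodule.sum_mem
      intro m hm
      have c4 := hp4 (mem_support_iff.1 hm)
      have cD := hpD (mem_support_iff.1 hm)
      have hsm : (monomial m) (coeff m p) = (coeff m p) • (monomial m (1:ZMod 2)) := by
        rw [smul_monomial, smul_eq_mul, mul_one]
      rw [hsm, map_smul]
      apply Submodule.smul_mem
      rcases monomial_mem s hs m c4 cD with h | h
      · rw [show (mkE.toLinearMap (monomial m (1:ZMod 2)) : E) = mkE (monomial m 1) from rfl, h]
        exact Submodule.mem_span_singleton_self _
      · have hz : mkE.toLinearMap (monomial m (1:ZMod 2)) = 0 := by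
          show mkE (monomial m 1) = 0
          rw [mkE, Ideal.Quotient.mkₐ_eq_mk, Ideal.Quotient.eq_zero_iff_mem]
          exact h
        rw [hz]
        exact Submodule.zero_mem _
    · rw [Submodule.span_le, Set.singleton_subset_iff]
      refine ⟨X (Gen.h 0) * X (Gen.c s), ⟨?_, ?_⟩, rfl⟩
      · rw [SetLike.mem_coe, mem_weightedHomogeneousSubmodule]
        exact (isWeightedHomogeneous_X _ _ _).mul (isWeightedHomogeneous_X _ _ _)
      · rw [SetLike.mem_coe, mem_weightedHomogeneousSubmodule]
        have hm := (isWeightedHomogeneous_X (ZMod 2) ideg (Gen.h 0)).mul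
          (isWeightedHomogeneous_X (ZMod 2) ideg (Gen.c s))
        have : ideg (Gen.h 0) + ideg (Gen.c s) = 2^(s+3) + 2^(s+1) + 2^s + 1 := by
          simp only [ideg]; ring
        rwa [this] at hm
  · exact h0cs_ne_zero s hs
end
end

section
/- For every natural number u ≥ 1, the bidegree (4, 4 + n_{1,2,u}) component of E, i.e. E^{4, 2^{u+3}+11}, is a one-dimensional F₂-vector space with basis the class of h_{u+3}c₀; in particular h_{u+3}c₀ ≠ 0 in E. -/
noncomputable section

open MvPolynomial

namespace Chen

lemma hdeg_pos (g : Gen) : 1 ≤ hdeg g := by cases g <;> simp [hdeg]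

lemma wt_single (w : Gen → ℕ) (g : Gen) (n : ℕ) :
    Finsupp.weight w (Finsupp.single g n) = n * w g := by
  simp [Finsupp.weight_apply, Finsupp.sum_single_index]

lemma weight_eq_zero {σ : Gen →₀ ℕ} (h : Finsupp.weight hdeg σ = 0) : σ = 0 := by
  ext g
  have h1 := Finsupp.le_weight hdeg (s := g) (by have := hdeg_pos g; omega) σ
  simp only [Finsupp.coe_zero, Pi.zero_apply]
  omega

lemma peel {σ : Gen →₀ ℕ} {m : ℕ} (h : Finsupp.weight hdeg σ = m) (hm : 0 < m) :
    ∃ g τ, σ = Finsupp.single g 1 + τ ∧ hdeg g + Finsupp.weight hdeg τ = m := by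
  classical
  have hσ : σ ≠ 0 := by rintro rfl; simp at h; omega
  obtain ⟨g, hg⟩ := Finsupp.support_nonempty_iff.2 hσ
  have hg1 : 1 ≤ σ g := Nat.one_le_iff_ne_zero.2 (Finsupp.mem_support_iff.1 hg)
  have key : σ = Finsupp.single g 1 + (σ - Finsupp.single g 1) := by
    ext x
    simp only [Finsupp.add_apply, Finsupp.tsub_apply, Finsupp.single_apply]
    by_cases hx : g = x
    · subst hx; simp; omega
    · simp [hx]
  refine ⟨g, σ - Finsupp.single g 1, key, ?_⟩
  rw [key, map_add, wt_single] at h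
  omega

end Chen
namespace Chen

lemma classify4 {σ : Gen →₀ ℕ} (h : Finsupp.weight hdeg σ = 4) :
    (∃ g, hdeg g = 4 ∧ σ = Finsupp.single g 1) ∨
    (∃ i j, σ = Finsupp.single (Gen.c i) 1 + Finsupp.single (Gen.h j) 1) ∨
    (∃ a b c d, σ = Finsupp.single (Gen.h a) 1 + Finsupp.single (Gen.h b) 1
      + Finsupp.single (Gen.h c) 1 + Finsupp.single (Gen.h d) 1) := by
  obtain ⟨g1, τ1, rfl, hw1⟩ := peel h (by omega)
  cases g1 with
  | h a =>
    right
    have hw1' : Finsupp.weight hdeg τ1 = 3 := by simp only [hdeg] at hw1; omega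
    obtain ⟨g2, τ2, rfl, hw2⟩ := peel hw1' (by omega)
    cases g2 with
    | h b =>
      have hw2' : Finsupp.weight hdeg τ2 = 2 := by simp only [hdeg] at hw2; omega
      obtain ⟨g3, τ3, rfl, hw3⟩ := peel hw2' (by omega)
      cases g3 with
      | h c =>
        have hw3' : Finsupp.weight hdeg τ3 = 1 := by simp only [hdeg] at hw3; omega
        obtain ⟨g4, τ4, rfl, hw4⟩ := peel hw3' (by omega)
        cases g4 with
        | h d =>
          have : τ4 = 0 := weight_eq_zero (by simp only [hdeg] at hw4; omega)
          subst this
          right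
          exact ⟨a, b, c, d, by abel⟩
        | c d => exfalso; simp only [hdeg] at hw4; omega
        | _ d => exfalso; simp only [hdeg] at hw4; omega
      | c c => exfalso; simp only [hdeg] at hw3; omega
      | _ c => exfalso; simp only [hdeg] at hw3; omega
    | c b =>
      have : τ2 = 0 := weight_eq_zero (by simp only [hdeg] at hw2; omega)
      subst this
      left
      exact ⟨b, a, by abel⟩
    | _ b => exfalso; simp only [hdeg] at hw2; omega
  | c a =>
    right; left
    have hw1' : Finsupp.weight hdeg τ1 = 1 := by simp only [hdeg] at hw1; omega
    obtain ⟨g2, τ2, rfl, hw2⟩ := peel hw1' (by omega)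
    cases g2 with
    | h b =>
      have : τ2 = 0 := weight_eq_zero (by simp only [hdeg] at hw2; omega)
      subst this
      exact ⟨a, b, by abel⟩
    | c b => exfalso; simp only [hdeg] at hw2; omega
    | _ b => exfalso; simp only [hdeg] at hw2; omega
  | d a =>
    have : τ1 = 0 := weight_eq_zero (by simp only [hdeg] at hw1; omega)
    subst this
    exact Or.inl ⟨Gen.d a, rfl, by abel⟩
  | e a =>
    have : τ1 = 0 := weight_eq_zero (by simp only [hdeg] at hw1; omega)
    subst this
    exact Or.inl ⟨Gen.e a, rfl, by abel⟩
  | f a =>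
    have : τ1 = 0 := weight_eq_zero (by simp only [hdeg] at hw1; omega)
    subst this
    exact Or.inl ⟨Gen.f a, rfl, by abel⟩
  | g a =>
    have : τ1 = 0 := weight_eq_zero (by simp only [hdeg] at hw1; omega)
    subst this
    exact Or.inl ⟨Gen.g a, rfl, by abel⟩
  | p a =>
    have : τ1 = 0 := weight_eq_zero (by simp only [hdeg] at hw1; omega)
    subst this
    exact Or.inl ⟨Gen.p a, rfl, by abel⟩
  | D3 a =>
    have : τ1 = 0 := weight_eq_zero (by simp only [hdeg] at hw1; omega)
    subst this
    exact Or.inl ⟨Gen.D3 a, rfl, by abel⟩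
  | p' a =>
    have : τ1 = 0 := weight_eq_zero (by simp only [hdeg] at hw1; omega)
    subst this
    exact Or.inl ⟨Gen.p' a, rfl, by abel⟩

end Chen
namespace Chen

lemma pow_fac {x k : ℕ} (h : k ≤ x) : ∃ m, 2 ^ x = 2 ^ k * m ∧ 1 ≤ m :=
  ⟨2 ^ (x - k), by rw [← pow_add]; congr 1; omega, Nat.one_le_two_pow⟩

lemma not_pow_eq {x k M : ℕ} (hM : 1 ≤ M) (h : 2 ^ x = 2 ^ k * (2 * M + 1)) : False := by
  rcases le_or_gt x k with hx | hx
  · have h1 : (2:ℕ) ^ x ≤ 2 ^ k := Nat.pow_le_pow_right (by norm_num) hx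
    have h2 : (1:ℕ) ≤ 2 ^ k := Nat.one_le_two_pow
    nlinarith
  · have hk : (2:ℕ) ^ x = 2 ^ k * 2 ^ (x - k) := by rw [← pow_add]; congr 1; omega
    have h2 : (0:ℕ) < 2 ^ k := Nat.pow_pos (by norm_num)
    have he : (2:ℕ) ^ (x - k) = 2 * M + 1 := Nat.eq_of_mul_eq_mul_left h2 (by rw [← hk, h])
    obtain ⟨m', hm', _⟩ := pow_fac (show 1 ≤ x - k by omega)
    omega

lemma h01_mem : X (Gen.h 0) * X (Gen.h 1) ∈ relIdeal := by
  apply Ideal.subset_span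
  exact Set.mem_iUnion.2 ⟨0, by left; rfl⟩

lemma L3 (u : ℕ) (hu : 1 ≤ u) (b c d : ℕ) (h : 2^b + 2^c + 2^d = 2^(u+3) + 10) :
    X (Gen.h 0) * X (Gen.h b) * X (Gen.h c) * X (Gen.h d) ∈ relIdeal := by
  obtain ⟨M, hM, hM1⟩ := pow_fac (show 4 ≤ u + 3 by omega)
  by_cases hb : b = 1
  · subst hb
    rw [show X (Gen.h 0) * X (Gen.h 1) * X (Gen.h c) * X (Gen.h d)
        = X (Gen.h 0) * X (Gen.h 1) * (X (Gen.h c) * X (Gen.h d)) by ring]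
    exact Ideal.mul_mem_right _ _ h01_mem
  by_cases hc : c = 1
  · subst hc
    rw [show X (Gen.h 0) * X (Gen.h b) * X (Gen.h 1) * X (Gen.h d)
        = X (Gen.h 0) * X (Gen.h 1) * (X (Gen.h b) * X (Gen.h d)) by ring]
    exact Ideal.mul_mem_right _ _ h01_mem
  by_cases hd : d = 1
  · subst hd
    rw [show X (Gen.h 0) * X (Gen.h b) * X (Gen.h c) * X (Gen.h 1)
        = X (Gen.h 0) * X (Gen.h 1) * (X (Gen.h b) * X (Gen.h c)) by ring]
    exact Ideal.mul_mem_right _ _ h01_mem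
  -- now each of b, c, d is 0 or ≥ 2 : derive a contradiction
  exfalso
  rcases Nat.eq_zero_or_pos b with rfl | hb2
  · rcases Nat.eq_zero_or_pos c with rfl | hc2
    · rcases Nat.eq_zero_or_pos d with rfl | hd2
      · simp only [pow_zero] at h; omega
      · obtain ⟨D, hD, hD1⟩ := pow_fac (show 2 ≤ d by omega)
        simp only [pow_zero] at h
        exact not_pow_eq hM1 (show 2^d = 2^3*(2*M+1) by omega)
    · rcases Nat.eq_zero_or_pos d with rfl | hd2
      · obtain ⟨C, hC, hC1⟩ := pow_fac (show 2 ≤ c by omega)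
        simp only [pow_zero] at h
        exact not_pow_eq hM1 (show 2^c = 2^3*(2*M+1) by omega)
      · obtain ⟨C, hC, hC1⟩ := pow_fac (show 2 ≤ c by omega)
        obtain ⟨D, hD, hD1⟩ := pow_fac (show 2 ≤ d by omega)
        omega
  · obtain ⟨B, hB, hB1⟩ := pow_fac (show 2 ≤ b by omega)
    rcases Nat.eq_zero_or_pos c with rfl | hc2
    · rcases Nat.eq_zero_or_pos d with rfl | hd2
      · simp only [pow_zero] at h
        exact not_pow_eq hM1 (show 2^b = 2^3*(2*M+1) by omega)
      · obtain ⟨D, hD, hD1⟩ := pow_fac (show 2 ≤ d by omega)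
        omega
    · obtain ⟨C, hC, hC1⟩ := pow_fac (show 2 ≤ c by omega)
      rcases Nat.eq_zero_or_pos d with rfl | hd2
      · omega
      · obtain ⟨D, hD, hD1⟩ := pow_fac (show 2 ≤ d by omega)
        omega

lemma pow4 (u : ℕ) (hu : 1 ≤ u) (a b c d : ℕ)
    (h : 2^a + 2^b + 2^c + 2^d = 2^(u+3) + 11) :
    X (Gen.h a) * X (Gen.h b) * X (Gen.h c) * X (Gen.h d) ∈ relIdeal := by
  obtain ⟨M, hM, hM1⟩ := pow_fac (show 4 ≤ u + 3 by omega)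
  rcases Nat.eq_zero_or_pos a with rfl | ha
  · exact L3 u hu b c d (by simp only [pow_zero] at h; omega)
  rcases Nat.eq_zero_or_pos b with rfl | hb
  · rw [show X (Gen.h a) * X (Gen.h 0) * X (Gen.h c) * X (Gen.h d)
        = X (Gen.h 0) * X (Gen.h a) * X (Gen.h c) * X (Gen.h d) by ring]
    exact L3 u hu a c d (by simp only [pow_zero] at h; omega)
  rcases Nat.eq_zero_or_pos c with rfl | hc
  · rw [show X (Gen.h a) * X (Gen.h b) * X (Gen.h 0) * X (Gen.h d)
        = X (Gen.h 0) * X (Gen.h a) * X (Gen.h b) * X (Gen.h d) by ring]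
    exact L3 u hu a b d (by simp only [pow_zero] at h; omega)
  rcases Nat.eq_zero_or_pos d with rfl | hd
  · rw [show X (Gen.h a) * X (Gen.h b) * X (Gen.h c) * X (Gen.h 0)
        = X (Gen.h 0) * X (Gen.h a) * X (Gen.h b) * X (Gen.h c) by ring]
    exact L3 u hu a b c (by simp only [pow_zero] at h; omega)
  · exfalso
    obtain ⟨A, hA, _⟩ := pow_fac (show 1 ≤ a by omega)
    obtain ⟨B, hB, _⟩ := pow_fac (show 1 ≤ b by omega)
    obtain ⟨C, hC, _⟩ := pow_fac (show 1 ≤ c by omega)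
    obtain ⟨D, hD, _⟩ := pow_fac (show 1 ≤ d by omega)
    omega

lemma chcase (u : ℕ) (hu : 1 ≤ u) (i j : ℕ)
    (h : 2^(i+3) + 2^(i+1) + 2^i + 2^j = 2^(u+3) + 11) : i = 0 ∧ j = u + 3 := by
  obtain ⟨M, hM, hM1⟩ := pow_fac (show 4 ≤ u + 3 by omega)
  rcases i with _ | i'
  · refine ⟨rfl, ?_⟩
    have hj : (2:ℕ)^j = 2^(u+3) := by norm_num at h; omega
    exact Nat.pow_right_injective (le_refl 2) hj
  · exfalso
    obtain ⟨A, hA, hA1⟩ := pow_fac (show 1 ≤ i' + 1 + 3 by omega)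
    obtain ⟨B, hB, hB1⟩ := pow_fac (show 1 ≤ i' + 1 + 1 by omega)
    obtain ⟨C, hC, hC1⟩ := pow_fac (show 1 ≤ i' + 1 by omega)
    have hj : j = 0 := by
      by_contra hj
      obtain ⟨J, hJ, hJ1⟩ := pow_fac (show 1 ≤ j by omega)
      omega
    subst hj
    simp only [pow_zero] at h
    rcases i' with _ | i''
    · norm_num at h; omega
    · obtain ⟨A', hA', hA1'⟩ := pow_fac (show 2 ≤ i'' + 1 + 1 + 3 by omega)
      obtain ⟨B', hB', hB1'⟩ := pow_fac (show 2 ≤ i'' + 1 + 1 + 1 by omega)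
      obtain ⟨C', hC', hC1'⟩ := pow_fac (show 2 ≤ i'' + 1 + 1 by omega)
      omega

lemma deg4case (u : ℕ) (hu : 1 ≤ u) (g : Gen) (h4 : hdeg g = 4)
    (hN : ideg g = 2^(u+3) + 11) : False := by
  obtain ⟨M, hM, hM1⟩ := pow_fac (show 4 ≤ u + 3 by omega)
  cases g with
  | h i => simp [hdeg] at h4
  | c i => simp [hdeg] at h4
  | d i =>
    simp only [ideg] at hN
    rcases i with _ | i'
    · norm_num at hN; omega
    · obtain ⟨A, hA, hA1⟩ := pow_fac (show 1 ≤ i' + 1 + 4 by omega)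
      obtain ⟨B, hB, hB1⟩ := pow_fac (show 1 ≤ i' + 1 + 1 by omega)
      omega
  | e i =>
    simp only [ideg] at hN
    rcases i with _ | i'
    · norm_num at hN; omega
    · obtain ⟨A, hA, hA1⟩ := pow_fac (show 1 ≤ i' + 1 + 4 by omega)
      obtain ⟨B, hB, hB1⟩ := pow_fac (show 1 ≤ i' + 1 + 2 by omega)
      obtain ⟨C, hC, hC1⟩ := pow_fac (show 1 ≤ i' + 1 by omega)
      omega
  | f i =>
    simp only [ideg] at hN
    obtain ⟨A, hA, hA1⟩ := pow_fac (show 1 ≤ i + 4 by omega)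
    obtain ⟨B, hB, hB1⟩ := pow_fac (show 1 ≤ i + 2 by omega)
    obtain ⟨C, hC, hC1⟩ := pow_fac (show 1 ≤ i + 1 by omega)
    omega
  | g i =>
    simp only [ideg] at hN
    obtain ⟨A, hA, hA1⟩ := pow_fac (show 1 ≤ i + 4 by omega)
    obtain ⟨B, hB, hB1⟩ := pow_fac (show 1 ≤ i + 3 by omega)
    omega
  | p i =>
    simp only [ideg] at hN
    rcases i with _ | i'
    · norm_num at hN; omega
    · obtain ⟨A, hA, hA1⟩ := pow_fac (show 1 ≤ i' + 1 + 5 by omega)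
      obtain ⟨B, hB, hB1⟩ := pow_fac (show 1 ≤ i' + 1 + 2 by omega)
      obtain ⟨C, hC, hC1⟩ := pow_fac (show 1 ≤ i' + 1 by omega)
      omega
  | D3 i =>
    simp only [ideg] at hN
    rcases i with _ | i'
    · norm_num at hN; omega
    · obtain ⟨A, hA, hA1⟩ := pow_fac (show 1 ≤ i' + 1 + 6 by omega)
      obtain ⟨B, hB, hB1⟩ := pow_fac (show 1 ≤ i' + 1 by omega)
      omega
  | p' i =>
    simp only [ideg] at hN
    rcases i with _ | i'
    · norm_num at hN; omega
    · obtain ⟨A, hA, hA1⟩ := pow_fac (show 1 ≤ i' + 1 + 6 by omega)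
      obtain ⟨B, hB, hB1⟩ := pow_fac (show 1 ≤ i' + 1 + 3 by omega)
      obtain ⟨C, hC, hC1⟩ := pow_fac (show 1 ≤ i' + 1 by omega)
      omega

end Chen
namespace Chen

lemma X_eq (g : Gen) : (X g : P) = monomial (Finsupp.single g 1) 1 := rfl

lemma mono_case (u : ℕ) (hu : 1 ≤ u) (σ : Gen →₀ ℕ)
    (h4 : Finsupp.weight hdeg σ = 4) (hN : Finsupp.weight ideg σ = 2^(u+3) + 11) :
    monomial σ (1 : ZMod 2) = X (Gen.h (u+3)) * X (Gen.c 0) ∨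
      monomial σ (1 : ZMod 2) ∈ relIdeal := by
  rcases classify4 h4 with ⟨g, hg4, rfl⟩ | ⟨i, j, rfl⟩ | ⟨a, b, c, d, rfl⟩
  · exact (deg4case u hu g hg4 (by rw [wt_single] at hN; omega)).elim
  · rw [map_add, wt_single, wt_single] at hN
    simp only [ideg, one_mul] at hN
    obtain ⟨hi, hj⟩ := chcase u hu i j (by omega)
    subst hi; subst hj
    left
    rw [X_eq, X_eq, monomial_mul, one_mul]
    congr 1
    abel
  · rw [map_add, map_add, map_add, wt_single, wt_single, wt_single, wt_single] at hN
    simp only [ideg, one_mul] at hN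
    right
    have e : monomial (Finsupp.single (Gen.h a) 1 + Finsupp.single (Gen.h b) 1
        + Finsupp.single (Gen.h c) 1 + Finsupp.single (Gen.h d) 1) (1 : ZMod 2)
        = X (Gen.h a) * X (Gen.h b) * X (Gen.h c) * X (Gen.h d) := by
      simp only [X_eq, monomial_mul, one_mul]
    rw [e]
    exact pow4 u hu a b c d (by omega)

end Chen
namespace Chen

open DualNumber TrivSqZeroExt

abbrev R2 := DualNumber (Polynomial (ZMod 2))

def fgen (u : ℕ) : Gen → R2
  | .h i => if i = u + 3 then ε else 0
  | .c i => if i = 0 then inl Polynomial.X else 0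
  | _ => 0

lemma fgen_rels (u : ℕ) (hu : 1 ≤ u) : ∀ r ∈ rels, aeval (fgen u) r = 0 := by
  intro r hr
  obtain ⟨s, ⟨i, rfl⟩, hi⟩ := hr
  simp only [Set.mem_insert_iff, Set.mem_singleton_iff] at hi
  rcases hi with rfl|rfl|rfl|rfl|rfl|rfl|rfl|rfl
  · simp only [map_mul, aeval_X, fgen]
    split_ifs <;> first | (exfalso; omega) | simp_all
  · simp only [map_mul, map_pow, aeval_X, fgen]
    split_ifs <;> first | (exfalso; omega) | simp_all [pow_two, eps_mul_eps]
  · simp only [map_mul, map_pow, aeval_X, fgen]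
    split_ifs <;> first | (exfalso; omega) | simp_all [pow_two, eps_mul_eps]
  · simp only [map_sub, map_mul, map_pow, aeval_X, fgen]
    split_ifs <;> first | (exfalso; omega) |
      simp_all [pow_succ, pow_two, eps_mul_eps, mul_assoc]
  · simp only [map_mul, aeval_X, fgen]
    split_ifs <;> first | (exfalso; omega) | simp_all
  · simp only [map_mul, aeval_X, fgen]
    split_ifs <;> first | (exfalso; omega) | simp_all
  · simp only [map_mul, aeval_X, fgen]
    split_ifs <;> first | (exfalso; omega) | simp_all
  · simp only [map_mul, aeval_X, fgen]
    split_ifs <;> first | (exfalso; omega) | simp_all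

lemma m_not_mem (u : ℕ) (hu : 1 ≤ u) :
    (X (Gen.h (u+3)) * X (Gen.c 0) : P) ∉ relIdeal := by
  intro hmem
  have hker : relIdeal ≤ RingHom.ker ((aeval (fgen u) : P →ₐ[ZMod 2] R2) : P →+* R2) :=
    Ideal.span_le.2 (fun r hr => fgen_rels u hu r hr)
  have h0 : aeval (fgen u) (X (Gen.h (u+3)) * X (Gen.c 0) : P) = 0 := hker hmem
  have h1 : aeval (fgen u) (X (Gen.h (u+3)) * X (Gen.c 0) : P) = ε * inl Polynomial.X := by
    simp [fgen]
  rw [h1, eps, inr_mul_inl] at h0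
  have := congrArg TrivSqZeroExt.snd h0
  simp at this
end Chen
namespace Chen

lemma mkE_eq_mk (q : P) : mkE q = Ideal.Quotient.mk relIdeal q := rfl

lemma monomial_coeff_smul (σ : Gen →₀ ℕ) (a : ZMod 2) :
    (monomial σ a : P) = a • monomial σ 1 := by
  rw [smul_monomial, smul_eq_mul, mul_one]

end Chen

theorem Chen.stmt3_aux (u : ℕ) (hu : 1 ≤ u) :
    component 4 (2 ^ (u + 3) + 11) =
        Submodule.span (ZMod 2) {mkE (X (Gen.h (u + 3)) * X (Gen.c 0))} ∧
      mkE (X (Gen.h (u + 3)) * X (Gen.c 0)) ≠ 0 := by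
  have hmono : (X (Gen.h (u+3)) * X (Gen.c 0) : P)
      = monomial (Finsupp.single (Gen.h (u+3)) 1 + Finsupp.single (Gen.c 0) 1) 1 := by
    rw [Chen.X_eq, Chen.X_eq, monomial_mul, one_mul]
  have hm4 : IsWeightedHomogeneous hdeg (X (Gen.h (u+3)) * X (Gen.c 0) : P) 4 := by
    rw [hmono]
    apply isWeightedHomogeneous_monomial
    rw [map_add, Chen.wt_single, Chen.wt_single]
    simp [hdeg]
  have hmN : IsWeightedHomogeneous ideg (X (Gen.h (u+3)) * X (Gen.c 0) : P)
      (2 ^ (u + 3) + 11) := by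
    rw [hmono]
    apply isWeightedHomogeneous_monomial
    rw [map_add, Chen.wt_single, Chen.wt_single]
    simp [ideg]
  constructor
  · apply le_antisymm
    · rintro x hx
      obtain ⟨p, hp, rfl⟩ := Submodule.mem_map.1 hx
      obtain ⟨hp4, hpN⟩ := Submodule.mem_inf.1 hp
      rw [mem_weightedHomogeneousSubmodule] at hp4 hpN
      have : mkE.toLinearMap p
          = ∑ σ ∈ p.support, mkE.toLinearMap (monomial σ (coeff σ p)) := by
        conv_lhs => rw [p.as_sum]
        rw [map_sum]
      rw [this]
      apply Submodule.sum_mem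
      intro σ hσ
      have h4σ := hp4 (mem_support_iff.1 hσ)
      have hNσ := hpN (mem_support_iff.1 hσ)
      rcases Chen.mono_case u hu σ h4σ hNσ with he | hmem
      · rw [show mkE.toLinearMap (monomial σ (coeff σ p))
            = coeff σ p • mkE (monomial σ 1) by
          rw [Chen.monomial_coeff_smul]; simp]
        rw [he]
        exact Submodule.smul_mem _ _ (Submodule.mem_span_singleton_self _)
      · have hz : mkE.toLinearMap (monomial σ (coeff σ p)) = 0 := by
          have hmem' : (monomial σ (coeff σ p) : P) ∈ relIdeal := by
            rw [Chen.monomial_coeff_smul, Algebra.smul_def]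
            exact Ideal.mul_mem_left _ _ hmem
          show mkE (monomial σ (coeff σ p)) = 0
          rw [Chen.mkE_eq_mk]
          exact Ideal.Quotient.eq_zero_iff_mem.2 hmem'
        rw [hz]
        exact Submodule.zero_mem _
    · rw [Submodule.span_le, Set.singleton_subset_iff]
      exact Submodule.mem_map_of_mem (Submodule.mem_inf.2 ⟨hm4, hmN⟩)
  · intro h0
    rw [Chen.mkE_eq_mk, Ideal.Quotient.eq_zero_iff_mem] at h0
    exact Chen.m_not_mem u hu h0

/-- For every `u ≥ 1`, `E^{4, 4 + n_{1,2,u}} = E^{4, 2^{u+3}+11}` is one-dimensional over `F₂`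
with basis the class of `h_{u+3}c₀`; in particular `h_{u+3}c₀ ≠ 0` in `E`. -/
theorem stmt3 (u : ℕ) (hu : 1 ≤ u) :
    component 4 (2 ^ (u + 3) + 11) =
        Submodule.span (ZMod 2) {mkE (X (Gen.h (u + 3)) * X (Gen.c 0))} ∧
      mkE (X (Gen.h (u + 3)) * X (Gen.c 0)) ≠ 0 := Chen.stmt3_aux u hu
end
end

section
/- For all natural numbers s ≥ 2 and u ≥ 1 with u ≠ 2, the bidegree (4, 4 + n_{s,1,u}) component E^{4, 2^{s+u+1}+2^{s+1}+2^s+1} of E is the zero vector space. -/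
noncomputable section

open MvPolynomial

-- ===== arithmetic helpers =====

lemma two_pow_pos (k : ℕ) : 1 ≤ 2^k := Nat.one_le_two_pow

lemma pow_eq_two_mul (x y : ℕ) (h : y = x + 1) : (2:ℕ)^y = 2*2^x := by
  subst h; rw [pow_succ]; ring

lemma pow_split' (x y k : ℕ) (hk : k = x + y) : (2:ℕ)^k = 2^x * 2^y := by
  subst hk; rw [pow_add]

lemma pow_inj {a b : ℕ} (h : (2:ℕ)^a = 2^b) : a = b :=
  Nat.pow_right_injective (by norm_num) h

lemma triple (u : ℕ) (hu : 1 ≤ u) : ∀ s b c e : ℕ, b ≤ c → c ≤ e →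
    2^b + 2^c + 2^e = 2^(s+u+1) + 2^(s+1) + 2^s → b = s ∧ c = s+1 ∧ e = s+u+1 := by
  intro s
  induction s with
  | zero =>
    intro b c e hbc hce h
    simp only [Nat.zero_add, pow_zero, pow_one] at h
    have hU : (2:ℕ)^(u+1) = 2*2^u := pow_eq_two_mul u (u+1) rfl
    have hU1 := two_pow_pos u
    have hb : b = 0 := by
      by_contra hb0
      obtain ⟨b', rfl⟩ : ∃ b', b = b'+1 := ⟨b-1, by omega⟩
      obtain ⟨c', rfl⟩ : ∃ c', c = c'+1 := ⟨c-1, by omega⟩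
      obtain ⟨e', rfl⟩ : ∃ e', e = e'+1 := ⟨e-1, by omega⟩
      rw [pow_eq_two_mul b' _ rfl, pow_eq_two_mul c' _ rfl, pow_eq_two_mul e' _ rfl, hU] at h
      omega
    subst hb
    rw [pow_zero] at h
    have hkey : c = 1 ∧ e = u + 1 := by
      have hc : 1 ≤ c := by
        by_contra hc0
        have hc' : c = 0 := by omega
        subst hc'
        rw [pow_zero] at h
        rcases Nat.eq_zero_or_pos e with he | he
        · subst he; rw [pow_zero] at h; omega
        · obtain ⟨e', rfl⟩ : ∃ e', e = e'+1 := ⟨e-1, by omega⟩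
          rw [pow_eq_two_mul e' _ rfl, hU] at h
          have := two_pow_pos e'
          omega
      obtain ⟨c', rfl⟩ : ∃ c', c = c'+1 := ⟨c-1, by omega⟩
      obtain ⟨e', rfl⟩ : ∃ e', e = e'+1 := ⟨e-1, by omega⟩
      rw [pow_eq_two_mul c' _ rfl, pow_eq_two_mul e' _ rfl, hU] at h
      have hc'0 : c' = 0 := by
        by_contra hcc
        obtain ⟨c'', rfl⟩ : ∃ x, c' = x+1 := ⟨c'-1, by omega⟩
        obtain ⟨e'', rfl⟩ : ∃ x, e' = x+1 := ⟨e'-1, by omega⟩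
        obtain ⟨u', rfl⟩ : ∃ x, u = x+1 := ⟨u-1, by omega⟩
        rw [pow_eq_two_mul c'' _ rfl, pow_eq_two_mul e'' _ rfl, pow_eq_two_mul u' _ rfl] at h
        have := two_pow_pos c''; have := two_pow_pos e''; have := two_pow_pos u'
        omega
      subst hc'0
      rw [pow_zero] at h
      have he : (2:ℕ)^e' = 2^u := by omega
      have := pow_inj he
      omega
    omega
  | succ s ih =>
    intro b c e hbc hce h
    rw [show s+1+u+1 = (s+u+1)+1 by omega] at h
    rw [pow_eq_two_mul (s+u+1) _ rfl, pow_eq_two_mul (s+1) (s+1+1) rfl,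
        pow_eq_two_mul s (s+1) rfl] at h
    have hb : 1 ≤ b := by
      by_contra hb0
      have hb' : b = 0 := by omega
      subst hb'
      rw [pow_zero] at h
      rcases Nat.eq_zero_or_pos c with hc | hc
      · subst hc
        rw [pow_zero] at h
        rcases Nat.eq_zero_or_pos s with hs0 | hs0
        · subst hs0
          simp only [Nat.zero_add, pow_zero, pow_one] at h
          obtain ⟨u', rfl⟩ : ∃ x, u = x+1 := ⟨u-1, by omega⟩
          rw [pow_split' 2 u' (u'+1+1) (by omega)] at h
          norm_num at h
          have hU := two_pow_pos u'
          rcases Nat.lt_or_ge e 3 with he | he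
          · have h4 : (2:ℕ)^e ≤ 2^2 := Nat.pow_le_pow_right (by norm_num) (by omega)
            norm_num at h4
            omega
          · obtain ⟨e', rfl⟩ : ∃ x, e = x+3 := ⟨e-3, by omega⟩
            rw [pow_split' 3 e' (e'+3) (by omega)] at h
            norm_num at h
            have := two_pow_pos e'
            omega
        · obtain ⟨s', rfl⟩ : ∃ x, s = x+1 := ⟨s-1, by omega⟩
          rw [show s'+1+u+1 = (s'+u+1)+1 by omega, pow_eq_two_mul (s'+u+1) _ rfl,
              pow_eq_two_mul s' (s'+1) rfl] at h
          have := two_pow_pos (s'+u+1); have := two_pow_pos s'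
          rcases Nat.lt_or_ge e 2 with he | he
          · have h4 : (2:ℕ)^e ≤ 2^1 := Nat.pow_le_pow_right (by norm_num) (by omega)
            norm_num at h4
            omega
          · obtain ⟨e', rfl⟩ : ∃ x, e = x+2 := ⟨e-2, by omega⟩
            rw [pow_split' 2 e' (e'+2) (by omega)] at h
            norm_num at h
            omega
      · have hce1 : 1 ≤ e := le_trans hc hce
        obtain ⟨c', rfl⟩ : ∃ x, c = x+1 := ⟨c-1, by omega⟩
        obtain ⟨e', rfl⟩ : ∃ x, e = x+1 := ⟨e-1, by omega⟩
        rw [pow_eq_two_mul c' _ rfl, pow_eq_two_mul e' _ rfl] at h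
        omega
    obtain ⟨b', rfl⟩ : ∃ x, b = x+1 := ⟨b-1, by omega⟩
    obtain ⟨c', rfl⟩ : ∃ x, c = x+1 := ⟨c-1, by omega⟩
    obtain ⟨e', rfl⟩ : ∃ x, e = x+1 := ⟨e-1, by omega⟩
    rw [pow_eq_two_mul b' _ rfl, pow_eq_two_mul c' _ rfl, pow_eq_two_mul e' _ rfl] at h
    have h' : 2^b' + 2^c' + 2^e' = 2^(s+u+1) + 2^(s+1) + 2^s := by omega
    obtain ⟨h1, h2, h3⟩ := ih b' c' e' (by omega) (by omega) h'
    omega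

lemma quad (s u a b c e : ℕ) (hs : 2 ≤ s) (hu : 1 ≤ u) (hab : a ≤ b) (hbc : b ≤ c) (hce : c ≤ e)
    (h : 2^a+2^b+2^c+2^e = 2^(s+u+1)+2^(s+1)+2^s+1) :
    a = 0 ∧ b = s ∧ c = s+1 ∧ e = s+u+1 := by
  have ha : a = 0 := by
    by_contra ha0
    obtain ⟨a', rfl⟩ : ∃ x, a = x+1 := ⟨a-1, by omega⟩
    obtain ⟨b', rfl⟩ : ∃ x, b = x+1 := ⟨b-1, by omega⟩
    obtain ⟨c', rfl⟩ : ∃ x, c = x+1 := ⟨c-1, by omega⟩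
    obtain ⟨e', rfl⟩ : ∃ x, e = x+1 := ⟨e-1, by omega⟩
    rw [pow_eq_two_mul a' _ rfl, pow_eq_two_mul b' _ rfl, pow_eq_two_mul c' _ rfl,
        pow_eq_two_mul e' _ rfl, pow_eq_two_mul (s+u) (s+u+1) rfl,
        pow_eq_two_mul s (s+1) rfl, pow_eq_two_mul (s-1) s (by omega)] at h
    omega
  subst ha
  rw [pow_zero] at h
  have hb : 1 ≤ b := by
    by_contra hb0
    have hb' : b = 0 := by omega
    subst hb'
    rw [pow_zero] at h
    rcases Nat.eq_zero_or_pos c with hc | hc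
    · subst hc
      rw [pow_zero] at h
      rw [pow_split' 2 (s+u-1) (s+u+1) (by omega), pow_split' 2 (s-1) (s+1) (by omega),
          pow_split' 2 (s-2) s (by omega)] at h
      norm_num at h
      have := two_pow_pos (s+u-1); have := two_pow_pos (s-1); have := two_pow_pos (s-2)
      rcases Nat.lt_or_ge e 2 with he | he
      · have h4 : (2:ℕ)^e ≤ 2^1 := Nat.pow_le_pow_right (by norm_num) (by omega)
        norm_num at h4
        omega
      · obtain ⟨e', rfl⟩ : ∃ x, e = x+2 := ⟨e-2, by omega⟩
        rw [pow_split' 2 e' (e'+2) (by omega)] at h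
        norm_num at h
        omega
    · have hce1 : 1 ≤ e := le_trans hc hce
      obtain ⟨c', rfl⟩ : ∃ x, c = x+1 := ⟨c-1, by omega⟩
      obtain ⟨e', rfl⟩ : ∃ x, e = x+1 := ⟨e-1, by omega⟩
      rw [pow_eq_two_mul c' _ rfl, pow_eq_two_mul e' _ rfl, pow_eq_two_mul (s+u) (s+u+1) rfl,
          pow_eq_two_mul s (s+1) rfl, pow_eq_two_mul (s-1) s (by omega)] at h
      omega
  have h' : 2^b+2^c+2^e = 2^(s+u+1)+2^(s+1)+2^s := by omega
  obtain ⟨h1, h2, h3⟩ := triple u hu s b c e hbc hce h'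
  exact ⟨rfl, h1, h2, h3⟩

lemma sorter (a b c e : ℕ) : ∃ w x y z : ℕ, w ≤ x ∧ x ≤ y ∧ y ≤ z ∧
    2^w+2^x+2^y+2^z = 2^a+2^b+2^c+2^e ∧
    (∀ t, (t = w ∨ t = x ∨ t = y ∨ t = z) ↔ (t = a ∨ t = b ∨ t = c ∨ t = e)) := by
  have key : ∀ L : List ℕ, L.Pairwise (·≤·) → L.Perm [a,b,c,e] →
      ∃ w x y z : ℕ, w ≤ x ∧ x ≤ y ∧ y ≤ z ∧
        2^w+2^x+2^y+2^z = 2^a+2^b+2^c+2^e ∧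
        (∀ t, (t = w ∨ t = x ∨ t = y ∨ t = z) ↔ (t = a ∨ t = b ∨ t = c ∨ t = e)) := by
    intro L hsort hperm
    have hlen := hperm.length_eq
    obtain ⟨w,x,y,z,rfl⟩ : ∃ w x y z, L = [w,x,y,z] := by
      rcases L with _|⟨w,L⟩
      · simp at hlen
      rcases L with _|⟨x,L⟩
      · simp at hlen
      rcases L with _|⟨y,L⟩
      · simp at hlen
      rcases L with _|⟨z,L⟩
      · simp at hlen
      rcases L with _|⟨v,L⟩
      · exact ⟨w,x,y,z,rfl⟩
      · simp [List.length] at hlen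
    simp only [List.pairwise_cons, List.mem_cons, List.not_mem_nil, or_false,
      List.Pairwise.nil, and_true] at hsort
    refine ⟨w, x, y, z, by tauto, by tauto, by tauto, ?_, ?_⟩
    · have hh := (hperm.map (2 ^ ·)).sum_eq
      simp at hh
      omega
    · intro t
      have hh := hperm.mem_iff (a := t)
      simp only [List.mem_cons, List.not_mem_nil, or_false] at hh
      constructor
      · intro ht; rcases ht with rfl|rfl|rfl|rfl <;> tauto
      · intro ht
        have := hh.mpr (by tauto)
        tauto
  exact key _ (Multiset.pairwise_sort {a,b,c,e} (·≤·))
    (by rw [← Multiset.coe_eq_coe, Multiset.sort_eq (r := (·≤·))]; rfl)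

lemma quad' (s u a b c e : ℕ) (hs : 2 ≤ s) (hu : 1 ≤ u)
    (h : 2^a+2^b+2^c+2^e = 2^(s+u+1)+2^(s+1)+2^s+1) :
    ∀ t, (t = a ∨ t = b ∨ t = c ∨ t = e) ↔ (t = 0 ∨ t = s ∨ t = s+1 ∨ t = s+u+1) := by
  obtain ⟨w,x,y,z,h1,h2,h3,hsum,hiff⟩ := sorter a b c e
  obtain ⟨hw,hx,hy,hz⟩ := quad s u w x y z hs hu h1 h2 h3 (by omega)
  intro t
  rw [← hiff t]
  omega

lemma hc_ne (s u a b : ℕ) (hs : 2 ≤ s) (hu : 1 ≤ u) (hu2 : u ≠ 2)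
    (h : 2^a + (2^(b+3)+2^(b+1)+2^b) = 2^(s+u+1)+2^(s+1)+2^s+1) : False := by
  have h' : 2^a + 2^(b+3) + 2^(b+1) + 2^b = 2^(s+u+1)+2^(s+1)+2^s+1 := by omega
  have hq := quad' s u a (b+3) (b+1) b hs hu h'
  have h1 := (hq a).mp (Or.inl rfl)
  have h2 := (hq (b+3)).mp (Or.inr (Or.inl rfl))
  have h3 := (hq (b+1)).mp (Or.inr (Or.inr (Or.inl rfl)))
  have h4 := (hq b).mp (Or.inr (Or.inr (Or.inr rfl)))
  omega

lemma even_ne_D (s u n x : ℕ) (hs : 1 ≤ s) (h2 : n = 2*x)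
    (h : n = 2^(s+u+1)+2^(s+1)+2^s+1) : False := by
  subst h2
  rw [pow_eq_two_mul (s+u) (s+u+1) rfl, pow_eq_two_mul s (s+1) rfl,
      pow_eq_two_mul (s-1) s (by omega)] at h
  omega

lemma D_small (s u n : ℕ) (hs : 2 ≤ s) (hu : 1 ≤ u) (hn : n ≤ 73)
    (h : 2^(s+u+1)+2^(s+1)+2^s+1 = n) :
    ∃ w, 1 ≤ w ∧ ((s = 2 ∧ n = 16*w+13) ∨ (s = 3 ∧ n = 32*w+25) ∨ (s = 4 ∧ n = 64*w+49)) := by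
  have hs4 : s ≤ 4 := by
    by_contra hs5
    have h5 : (2:ℕ)^5 ≤ 2^s := Nat.pow_le_pow_right (by norm_num) (by omega)
    have h6 : (2:ℕ)^6 ≤ 2^(s+1) := Nat.pow_le_pow_right (by norm_num) (by omega)
    have h0 := two_pow_pos (s+u+1)
    norm_num at h5 h6
    omega
  refine ⟨2^(u-1), two_pow_pos _, ?_⟩
  rw [pow_split' (s+2) (u-1) (s+u+1) (by omega)] at h
  interval_cases s <;> norm_num at h ⊢ <;> omega

-- ===== bridge lemmas =====

lemma hdeg_cases (x : Gen) : hdeg x = 1 ∨ hdeg x = 3 ∨ hdeg x = 4 := by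
  cases x <;> simp [hdeg]

lemma eq_h {x : Gen} (h : hdeg x = 1) : ∃ i, x = Gen.h i := by
  cases x <;> first | exact ⟨_, rfl⟩ | simp [hdeg] at h

lemma eq_c {x : Gen} (h : hdeg x = 3) : ∃ i, x = Gen.c i := by
  cases x <;> first | exact ⟨_, rfl⟩ | simp [hdeg] at h

lemma weight_toMultiset (w : Gen → ℕ) (m : Gen →₀ ℕ) :
    (m.toMultiset.map w).sum = Finsupp.weight w m := by
  induction m using Finsupp.induction with
  | zero => simp
  | single_add a b f _ _ ih =>
    rw [Finsupp.toMultiset_add, Multiset.map_add, Multiset.sum_add, ih, map_add]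
    congr 1
    rw [Finsupp.toMultiset_single]
    simp [Finsupp.weight_apply, Finsupp.sum_single_index, Multiset.nsmul_singleton,
      Multiset.map_replicate, Multiset.sum_replicate, mul_comm]

lemma keyClaim (s u : ℕ) (hs : 2 ≤ s) (hu : 1 ≤ u) (hu2 : u ≠ 2) (m : Gen →₀ ℕ)
    (h4 : Finsupp.weight hdeg m = 4)
    (hD : Finsupp.weight ideg m = 2^(s+u+1)+2^(s+1)+2^s+1) :
    1 ≤ m (Gen.h s) ∧ 1 ≤ m (Gen.h (s+1)) := by
  classical
  rw [← weight_toMultiset] at h4 hD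
  have hcard : ∀ (N : Multiset Gen), Multiset.card N ≤ (N.map hdeg).sum := by
    intro N
    induction N using Multiset.induction with
    | empty => simp
    | cons x t ih =>
      rw [Multiset.map_cons, Multiset.sum_cons, Multiset.card_cons]
      have : 1 ≤ hdeg x := by rcases hdeg_cases x with h|h|h <;> omega
      omega
  have hc4 : Multiset.card m.toMultiset ≤ 4 := by
    have := hcard m.toMultiset
    omega
  have hcases : Multiset.card m.toMultiset = 0 ∨ Multiset.card m.toMultiset = 1 ∨
      Multiset.card m.toMultiset = 2 ∨ Multiset.card m.toMultiset = 3 ∨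
      Multiset.card m.toMultiset = 4 := by omega
  have hmem : Gen.h s ∈ m.toMultiset ∧ Gen.h (s+1) ∈ m.toMultiset := by
    rcases hcases with h0|h1|h2|h3|hk
    · exfalso
      rw [Multiset.card_eq_zero] at h0
      rw [h0] at h4
      simp at h4
    · exfalso
      obtain ⟨x, hx⟩ := Multiset.card_eq_one.mp h1
      rw [hx] at h4 hD
      simp only [Multiset.map_singleton, Multiset.sum_singleton] at h4 hD
      cases x with
      | h i => simp [hdeg] at h4
      | c i => simp [hdeg] at h4
      | d i =>
        simp only [ideg] at hD
        exact even_ne_D s u _ (2^(i+3)+2^i) (by omega)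
          (by rw [pow_eq_two_mul (i+3) (i+4) (by omega), pow_eq_two_mul i (i+1) (by omega)]; ring) hD
      | e i =>
        cases i with
        | zero =>
          simp only [ideg] at hD
          norm_num at hD
          have hD' : 2^(s+u+1)+2^(s+1)+2^s+1 = 21 := by omega
          obtain ⟨w, hw, hc⟩ := D_small s u 21 hs hu (by norm_num) hD'
          omega
        | succ i =>
          simp only [ideg] at hD
          exact even_ne_D s u _ (2^(i+4)+2^(i+2)+2^i) (by omega)
            (by rw [pow_eq_two_mul (i+4) (i+1+4) (by omega), pow_eq_two_mul (i+2) (i+1+2) (by omega),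
                    pow_eq_two_mul i (i+1) (by omega)]; ring) hD
      | f i =>
        simp only [ideg] at hD
        exact even_ne_D s u _ (2^(i+3)+2^(i+1)+2^i) (by omega)
          (by rw [pow_eq_two_mul (i+3) (i+4) (by omega), pow_eq_two_mul (i+1) (i+2) (by omega),
                  pow_eq_two_mul i (i+1) (by omega)]; ring) hD
      | g i =>
        simp only [ideg] at hD
        exact even_ne_D s u _ (2^(i+3)+2^(i+2)) (by omega)
          (by rw [pow_eq_two_mul (i+3) (i+4) (by omega), pow_eq_two_mul (i+2) (i+3) (by omega)]; ring) hD
      | p i =>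
        cases i with
        | zero =>
          simp only [ideg] at hD
          norm_num at hD
          have hD' : 2^(s+u+1)+2^(s+1)+2^s+1 = 37 := by omega
          obtain ⟨w, hw, hc⟩ := D_small s u 37 hs hu (by norm_num) hD'
          omega
        | succ i =>
          simp only [ideg] at hD
          exact even_ne_D s u _ (2^(i+5)+2^(i+2)+2^i) (by omega)
            (by rw [pow_eq_two_mul (i+5) (i+1+5) (by omega), pow_eq_two_mul (i+2) (i+1+2) (by omega),
                    pow_eq_two_mul i (i+1) (by omega)]; ring) hD
      | D3 i =>
        cases i with
        | zero =>
          simp only [ideg] at hD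
          norm_num at hD
          have hD' : 2^(s+u+1)+2^(s+1)+2^s+1 = 65 := by omega
          obtain ⟨w, hw, hc⟩ := D_small s u 65 hs hu (by norm_num) hD'
          omega
        | succ i =>
          simp only [ideg] at hD
          exact even_ne_D s u _ (2^(i+6)+2^i) (by omega)
            (by rw [pow_eq_two_mul (i+6) (i+1+6) (by omega), pow_eq_two_mul i (i+1) (by omega)]; ring) hD
      | p' i =>
        cases i with
        | zero =>
          simp only [ideg] at hD
          norm_num at hD
          have hD' : 2^(s+u+1)+2^(s+1)+2^s+1 = 73 := by omega
          obtain ⟨w, hw, hc⟩ := D_small s u 73 hs hu (by norm_num) hD'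
          omega
        | succ i =>
          simp only [ideg] at hD
          exact even_ne_D s u _ (2^(i+6)+2^(i+3)+2^i) (by omega)
            (by rw [pow_eq_two_mul (i+6) (i+1+6) (by omega), pow_eq_two_mul (i+3) (i+1+3) (by omega),
                    pow_eq_two_mul i (i+1) (by omega)]; ring) hD
    · exfalso
      obtain ⟨x, y, hx⟩ := Multiset.card_eq_two.mp h2
      rw [hx] at h4 hD
      simp only [Multiset.insert_eq_cons, Multiset.map_cons, Multiset.sum_cons,
        Multiset.map_singleton, Multiset.sum_singleton] at h4 hD
      have hx1 := hdeg_cases x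
      have hy1 := hdeg_cases y
      have hsplit : (hdeg x = 1 ∧ hdeg y = 3) ∨ (hdeg x = 3 ∧ hdeg y = 1) := by omega
      rcases hsplit with ⟨hhx, hhy⟩ | ⟨hhx, hhy⟩
      · obtain ⟨i, rfl⟩ := eq_h hhx
        obtain ⟨j, rfl⟩ := eq_c hhy
        simp only [ideg] at hD
        exact hc_ne s u i j hs hu hu2 (by omega)
      · obtain ⟨i, rfl⟩ := eq_h hhy
        obtain ⟨j, rfl⟩ := eq_c hhx
        simp only [ideg] at hD
        exact hc_ne s u i j hs hu hu2 (by omega)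
    · exfalso
      obtain ⟨x, y, z, hx⟩ := Multiset.card_eq_three.mp h3
      rw [hx] at h4
      simp only [Multiset.insert_eq_cons, Multiset.map_cons, Multiset.sum_cons,
        Multiset.map_singleton, Multiset.sum_singleton] at h4
      have hx1 := hdeg_cases x
      have hy1 := hdeg_cases y
      have hz1 := hdeg_cases z
      omega
    · obtain ⟨x, N, hxN⟩ : ∃ x N, m.toMultiset = x ::ₘ N := by
        have hne : m.toMultiset ≠ 0 := by
          intro h0
          rw [h0] at hk
          simp at hk
        obtain ⟨x, hxmem⟩ := Multiset.exists_mem_of_ne_zero hne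
        obtain ⟨N, hN⟩ := Multiset.exists_cons_of_mem hxmem
        exact ⟨x, N, hN⟩
      have hN3 : Multiset.card N = 3 := by
        rw [hxN] at hk
        simp [Multiset.card_cons] at hk
        omega
      obtain ⟨y, z, v, hyzv⟩ := Multiset.card_eq_three.mp hN3
      rw [hyzv] at hxN
      rw [hxN] at h4 hD
      simp only [Multiset.insert_eq_cons, Multiset.map_cons, Multiset.sum_cons,
        Multiset.map_singleton, Multiset.sum_singleton] at h4 hD
      have hdx := hdeg_cases x
      have hdy := hdeg_cases y
      have hdz := hdeg_cases z
      have hdv := hdeg_cases v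
      obtain ⟨i, rfl⟩ := eq_h (show hdeg x = 1 by omega)
      obtain ⟨j, rfl⟩ := eq_h (show hdeg y = 1 by omega)
      obtain ⟨k, rfl⟩ := eq_h (show hdeg z = 1 by omega)
      obtain ⟨l, rfl⟩ := eq_h (show hdeg v = 1 by omega)
      simp only [ideg] at hD
      have hq := quad' s u i j k l hs hu (by omega)
      have hsmem : s = i ∨ s = j ∨ s = k ∨ s = l := (hq s).mpr (Or.inr (Or.inl rfl))
      have hs1mem : s+1 = i ∨ s+1 = j ∨ s+1 = k ∨ s+1 = l :=
        (hq (s+1)).mpr (Or.inr (Or.inr (Or.inl rfl)))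
      rw [hxN]
      constructor
      · rcases hsmem with rfl|rfl|rfl|rfl <;> simp
      · rcases hs1mem with rfl|rfl|rfl|rfl <;> simp
  obtain ⟨hm1, hm2⟩ := hmem
  constructor
  · rw [← Finsupp.count_toMultiset]
    exact Multiset.count_pos.mpr hm1
  · rw [← Finsupp.count_toMultiset]
    exact Multiset.count_pos.mpr hm2

lemma keyMono (s u : ℕ) (hs : 2 ≤ s) (hu : 1 ≤ u) (hu2 : u ≠ 2) (m : Gen →₀ ℕ)
    (h4 : Finsupp.weight hdeg m = 4)
    (hD : Finsupp.weight ideg m = 2^(s+u+1)+2^(s+1)+2^s+1) :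
    monomial m (1 : ZMod 2) ∈ relIdeal := by
  classical
  obtain ⟨h1, h2⟩ := keyClaim s u hs hu hu2 m h4 hD
  set a : Gen →₀ ℕ := Finsupp.single (Gen.h s) 1 + Finsupp.single (Gen.h (s+1)) 1 with ha
  have hne1 : Gen.h (s+1) ≠ Gen.h s := by
    intro hh; injection hh with hh'; omega
  have hne2 : Gen.h s ≠ Gen.h (s+1) := fun hh => hne1 hh.symm
  have hle : a ≤ m := by
    rw [Finsupp.le_def]
    intro x
    rw [ha, Finsupp.add_apply]
    by_cases hx1 : x = Gen.h s
    · subst hx1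
      rw [Finsupp.single_eq_same, Finsupp.single_eq_of_ne' hne1]
      omega
    · by_cases hx2 : x = Gen.h (s+1)
      · subst hx2
        rw [Finsupp.single_eq_same, Finsupp.single_eq_of_ne' hne2]
        omega
      · rw [Finsupp.single_eq_of_ne' (fun hh => hx1 hh.symm),
          Finsupp.single_eq_of_ne' (fun hh => hx2 hh.symm)]
        omega
  have hsplit : m = a + (m - a) := (add_tsub_cancel_of_le hle).symm
  have hfac : (X (Gen.h s) * X (Gen.h (s+1))) * monomial (m - a) (1:ZMod 2) = monomial m 1 := by
    rw [show (X (Gen.h s) : P) = monomial (Finsupp.single (Gen.h s) 1) 1 from rfl,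
        show (X (Gen.h (s+1)) : P) = monomial (Finsupp.single (Gen.h (s+1)) 1) 1 from rfl,
        monomial_mul, monomial_mul, ← ha, ← hsplit]
    norm_num
  rw [← hfac]
  apply Ideal.mul_mem_right
  apply Ideal.subset_span
  exact Set.mem_iUnion.mpr ⟨s, Set.mem_insert _ _⟩

/-- For all `s ≥ 2` and `u ≥ 1` with `u ≠ 2`, the component
`E^{4, 4 + n_{s,1,u}} = E^{4, 2^{s+u+1}+2^{s+1}+2^s+1}` is zero. -/
theorem stmt6 (s u : ℕ) (hs : 2 ≤ s) (hu : 1 ≤ u) (hu2 : u ≠ 2) :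
    component 4 (2 ^ (s + u + 1) + 2 ^ (s + 1) + 2 ^ s + 1) = ⊥ := by
  rw [eq_bot_iff]
  rintro x hx
  simp only [component, Submodule.mem_map, Submodule.mem_inf,
    mem_weightedHomogeneousSubmodule] at hx
  obtain ⟨p, ⟨hp4, hpD⟩, rfl⟩ := hx
  have hp : p ∈ relIdeal := by
    rw [← support_sum_monomial_coeff p]
    apply Ideal.sum_mem
    intro mo hmo
    have hco : coeff mo p ≠ 0 := mem_support_iff.mp hmo
    have e1 : Finsupp.weight hdeg mo = 4 := hp4 hco
    have e2 : Finsupp.weight ideg mo = 2^(s+u+1)+2^(s+1)+2^s+1 := hpD hco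
    have hmo1 : monomial mo (coeff mo p) = C (coeff mo p) * monomial mo 1 := by
      rw [C_mul_monomial, mul_one]
    rw [hmo1]
    exact Ideal.mul_mem_left _ _ (keyMono s u hs hu hu2 mo e1 e2)
  rw [Submodule.mem_bot]
  show mkE p = 0
  rw [show (mkE p : E) = Ideal.Quotient.mk relIdeal p from rfl]
  exact Ideal.Quotient.eq_zero_iff_mem.mpr hp
end
end

section
/- For all natural numbers s, t, u ≥ 2, there exist no natural numbers i and j with 2^j + 2^{i+3} + 2^{i+1} + 2^i = 2^{s+t+u} + 2^{s+t} + 2^s + 1. (No product h_j c_i has internal degree 4 + n_{s,t,u} when s, t, u ≥ 2.) -/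
/-- If `2^i * 11 = 2^s * A` with `A` odd, then `A = 11`. -/
lemma aux13 : ∀ i s A : ℕ, A % 2 = 1 → 2 ^ i * 11 = 2 ^ s * A → A = 11 := by
  intro i
  induction i with
  | zero =>
    intro s A hA h
    cases s with
    | zero => simpa using h.symm
    | succ s =>
      have e' : 2 ^ (s + 1) * A = 2 * (2 ^ s * A) := by rw [pow_succ]; ring
      rw [e'] at h
      simp at h
      omega
  | succ i ih =>
    intro s A hA h
    have e : 2 ^ (i + 1) * 11 = 2 * (2 ^ i * 11) := by rw [pow_succ]; ring
    cases s with
    | zero =>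
      rw [e] at h
      simp at h
      omega
    | succ s =>
      have e' : 2 ^ (s + 1) * A = 2 * (2 ^ s * A) := by rw [pow_succ]; ring
      rw [e, e'] at h
      exact ih s A hA (Nat.eq_of_mul_eq_mul_left (by norm_num) h)

/-- For all `s, t, u ≥ 2` there are no naturals `i, j` with
`2^j + 2^{i+3} + 2^{i+1} + 2^i = 2^{s+t+u} + 2^{s+t} + 2^s + 1`:
no product `h_j c_i` has internal degree `4 + n_{s,t,u}` when `s, t, u ≥ 2`. -/
theorem stmt13 (s t u : ℕ) (hs : 2 ≤ s) (ht : 2 ≤ t) (hu : 2 ≤ u) :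
    ¬ ∃ i j : ℕ, 2 ^ j + 2 ^ (i + 3) + 2 ^ (i + 1) + 2 ^ i =
      2 ^ (s + t + u) + 2 ^ (s + t) + 2 ^ s + 1 := by
  rintro ⟨i, j, h⟩
  have hd4s : (4 : ℕ) ∣ 2 ^ s := by
    have := pow_dvd_pow 2 hs; norm_num at this; exact this
  have hd4st : (4 : ℕ) ∣ 2 ^ (s + t) := by
    have : 2 ≤ s + t := by omega
    have := pow_dvd_pow 2 this; norm_num at this; exact this
  have hd4stu : (4 : ℕ) ∣ 2 ^ (s + t + u) := by
    have : 2 ≤ s + t + u := by omega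
    have := pow_dvd_pow 2 this; norm_num at this; exact this
  have hb : (64 : ℕ) ≤ 2 ^ (s + t + u) := by
    have : 6 ≤ s + t + u := by omega
    calc (64 : ℕ) = 2 ^ 6 := by norm_num
    _ ≤ 2 ^ (s + t + u) := Nat.pow_le_pow_right (by norm_num) this
  have p1 : 0 < 2 ^ s := Nat.pow_pos (by norm_num)
  have p2 : 0 < 2 ^ (s + t) := Nat.pow_pos (by norm_num)
  have p3 : 0 < 2 ^ (s + t + u) := Nat.pow_pos (by norm_num)
  rcases Nat.eq_zero_or_pos i with hi | hi
  · subst hi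
    norm_num at h
    -- h : 2 ^ j + 11 = RHS
    have hj2 : 2 ≤ j := by
      by_contra hc
      push_neg at hc
      interval_cases j <;> norm_num at h <;> omega
    have : (4 : ℕ) ∣ 2 ^ j := by
      have := pow_dvd_pow 2 hj2; norm_num at this; exact this
    have p4 : 0 < 2 ^ j := Nat.pow_pos (by norm_num)
    omega
  · rcases Nat.eq_zero_or_pos j with hj | hj
    · subst hj
      have e1 : 2 ^ (i + 3) + 2 ^ (i + 1) + 2 ^ i = 2 ^ i * 11 := by
        rw [pow_add, pow_add]; ring
      have e2 : 2 ^ (s + t + u) + 2 ^ (s + t) + 2 ^ s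
          = 2 ^ s * (2 ^ (t + u) + 2 ^ t + 1) := by
        rw [show s + t + u = s + (t + u) by omega, pow_add, pow_add]; ring
      have key : 2 ^ i * 11 = 2 ^ s * (2 ^ (t + u) + 2 ^ t + 1) := by
        rw [← e1, ← e2]; omega
      have hodd : (2 ^ (t + u) + 2 ^ t + 1) % 2 = 1 := by
        have h1 : (2 : ℕ) ∣ 2 ^ t := dvd_pow_self 2 (by omega)
        have h2 : (2 : ℕ) ∣ 2 ^ (t + u) := dvd_pow_self 2 (by omega)
        omega
      have hA := aux13 i s _ hodd key
      have b1 : (4 : ℕ) ≤ 2 ^ t := by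
        calc (4 : ℕ) = 2 ^ 2 := by norm_num
        _ ≤ 2 ^ t := Nat.pow_le_pow_right (by norm_num) ht
      have b2 : (16 : ℕ) ≤ 2 ^ (t + u) := by
        calc (16 : ℕ) = 2 ^ 4 := by norm_num
        _ ≤ 2 ^ (t + u) := Nat.pow_le_pow_right (by norm_num) (by omega)
      omega
    · have h1 : (2 : ℕ) ∣ 2 ^ j := dvd_pow_self 2 (by omega)
      have h2 : (2 : ℕ) ∣ 2 ^ (i + 3) := dvd_pow_self 2 (by omega)
      have h3 : (2 : ℕ) ∣ 2 ^ (i + 1) := dvd_pow_self 2 (by omega)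
      have h4 : (2 : ℕ) ∣ 2 ^ i := dvd_pow_self 2 (by omega)
      have h5 : (2 : ℕ) ∣ 2 ^ s := dvd_pow_self 2 (by omega)
      have h6 : (2 : ℕ) ∣ 2 ^ (s + t) := dvd_pow_self 2 (by omega)
      have h7 : (2 : ℕ) ∣ 2 ^ (s + t + u) := dvd_pow_self 2 (by omega)
      omega
end
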